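/- arXiv:1612.06419 — 7 statements merged into one kernel-verified Lean document; each statement's English description precedes it below -/
import Mathlib

section
/- Let f ∈ L^1([0,1]) and C ∈ ℕ. If for all x, y ∈ ℝ with |x − y| ≤ 2^{−(n+C)} one has |∫_{[x,y]} f̃ dλ| < 2^{−n} for every n ∈ ℕ (where f̃ is the extension of f by zero to ℝ), then f ∈ L^∞([0,1]) with ‖f‖_∞ ≤ 2^C. -/
open MeasureTheory
open scoped ENNReal

/-- If n ↦ n + C is a singularity modulus of f ∈ L¹([0,1]) (extended by zero),
then f ∈ L^∞ with ‖f‖_∞ ≤ 2^C. -/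
theorem stmt2 (f : ℝ → ℝ) (hsupp : ∀ x, x ∉ Set.Icc (0:ℝ) 1 → f x = 0)
    (hint : Integrable f) (C : ℕ)
    (hmod : ∀ n : ℕ, ∀ x y : ℝ, |x - y| ≤ (2:ℝ) ^ (-((n : ℤ) + C)) →
      |∫ t in Set.uIcc x y, f t| < (2:ℝ) ^ (-(n : ℤ))) :
    eLpNorm f ⊤ volume ≤ 2 ^ C := by
  have hbound : ∀ᵐ x ∂(volume : Measure ℝ), ‖f x‖ ≤ (2:ℝ) ^ C := by
    filter_upwards [IsUnifLocDoublingMeasure.ae_tendsto_average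
      (μ := (volume : Measure ℝ)) hint.locallyIntegrable 1] with x hx
    set δ : ℕ → ℝ := fun n => (2:ℝ) ^ (-((n : ℤ) + C + 1)) with hδ
    have hδpos : ∀ n, 0 < δ n := fun n => by positivity
    have hδeq : ∀ n, δ n = ((2:ℝ)⁻¹) ^ (n + C + 1) := by
      intro n
      show (2:ℝ) ^ (-((n : ℤ) + C + 1)) = ((2:ℝ)⁻¹) ^ (n + C + 1)
      rw [show (-((n : ℤ) + C + 1)) = -((n + C + 1 : ℕ) : ℤ) by push_cast; ring,
        zpow_neg, zpow_natCast, ← inv_pow]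
    have hδlim : Filter.Tendsto δ Filter.atTop (nhdsWithin 0 (Set.Ioi 0)) := by
      apply tendsto_nhdsWithin_of_tendsto_nhds_of_eventually_within
      · have h2 : |(2:ℝ)⁻¹| < 1 := by rw [abs_of_pos]; norm_num; norm_num
        have := (tendsto_pow_atTop_nhds_zero_of_abs_lt_one h2).comp
          (Filter.tendsto_add_atTop_nat (C + 1))
        refine this.congr fun n => ?_
        simp only [Function.comp_apply, hδeq n, add_assoc]
      · exact Filter.Eventually.of_forall fun n => hδpos n
    have key := hx (fun _ => x) δ hδlim (Filter.Eventually.of_forall fun n => by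
      simpa using (le_of_lt (by simpa using hδpos n)))
    -- bound each average
    have havg : ∀ n, ‖⨍ y in Metric.closedBall x (δ n), f y‖ ≤ (2:ℝ) ^ C := by
      intro n
      have hball : Metric.closedBall x (δ n) = Set.uIcc (x - δ n) (x + δ n) := by
        rw [Real.closedBall_eq_Icc, Set.uIcc_of_le (by linarith [hδpos n])]
      have hlen : |(x - δ n) - (x + δ n)| = (2:ℝ) ^ (-((n : ℤ) + C)) := by
        have : (x - δ n) - (x + δ n) = -(2 * δ n) := by ring
        rw [this, abs_neg, abs_of_pos (by positivity), show δ n = (2:ℝ) ^ (-((n : ℤ) + C + 1)) from rfl]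
        rw [show (-((n : ℤ) + C)) = 1 + (-((n : ℤ) + C + 1)) by ring, zpow_add₀ (two_ne_zero)]
        norm_num
      have hint' := hmod n (x - δ n) (x + δ n) (le_of_eq hlen)
      have hvol : (volume (Metric.closedBall x (δ n))).toReal = 2 * δ n := by
        rw [Real.closedBall_eq_Icc, Real.volume_Icc,
          ENNReal.toReal_ofReal (by linarith [hδpos n])]
        ring
      rw [setAverage_eq, measureReal_def, hvol, smul_eq_mul, Real.norm_eq_abs, abs_mul,
        abs_of_pos (by positivity : (0:ℝ) < (2 * δ n)⁻¹)]
      have h2δ : 2 * δ n = (2:ℝ) ^ (-((n : ℤ) + C)) := by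
        rw [show δ n = (2:ℝ) ^ (-((n : ℤ) + C + 1)) from rfl, show (-((n : ℤ) + C)) = 1 + (-((n : ℤ) + C + 1)) by ring,
          zpow_add₀ (two_ne_zero)]
        norm_num
      rw [hball] at *
      calc (2 * δ n)⁻¹ * |∫ t in Set.uIcc (x - δ n) (x + δ n), f t|
          ≤ (2 * δ n)⁻¹ * (2:ℝ) ^ (-(n : ℤ)) := by
            apply mul_le_mul_of_nonneg_left (le_of_lt hint') (by positivity)
        _ = (2:ℝ) ^ C := by
            rw [h2δ, ← zpow_neg, ← zpow_add₀ (two_ne_zero (α := ℝ))]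
            rw [show (-(-((n:ℤ) + C)) + -(n:ℤ)) = (C : ℤ) by ring, zpow_natCast]
    exact le_of_tendsto (key.norm) (Filter.Eventually.of_forall havg)
  calc eLpNorm f ⊤ volume = eLpNormEssSup f volume := eLpNorm_exponent_top
    _ ≤ ENNReal.ofReal ((2:ℝ) ^ C) := eLpNormEssSup_le_of_ae_bound hbound
    _ = 2 ^ C := by
        rw [ENNReal.ofReal_pow (by norm_num), ENNReal.ofReal_ofNat]
end

section
/- Let Ω ⊆ ℝ^d be bounded and measurable with λ(Ω) > 0, 1 ≤ p < ∞, f ∈ L^p(Ω), and let μ be an L^p-modulus of f. Then for every i ∈ {1,…,d}, the map n ↦ μ(n + 1 + ⌈log₂ λ(Ω)⌉ + (d−1)⌈log₂ diam(Ω)⌉) is a singularity modulus of the function f_i obtained from f̃ by integrating over all variables except the i-th: more precisely, for all x ∈ ℝ and |h| ≤ 2^{−μ(n + 1 + log₂ λ(Ω) + (d−1) log₂ diam(Ω))} one has |∫_x^{x+h} f_i(t) dt| < 2^{−n}. -/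
open MeasureTheory
open scoped ENNReal

lemma vol_pi_eq {ι : Type} (F1 F2 : Fintype ι) :
    @volume _ (@MeasureSpace.pi ι F1 (fun _ => ℝ) (fun _ => Real.measureSpace))
    = @volume _ (@MeasureSpace.pi ι F2 (fun _ => ℝ) (fun _ => Real.measureSpace)) := by
  obtain rfl := Subsingleton.elim F1 F2; rfl

lemma fubini_slice {d : ℕ} (i : Fin d) (φ : (Fin d → ℝ) → ℝ)
    (hφ : Integrable φ (volume : Measure (Fin d → ℝ))) :
    ∫ z, φ z = ∫ t : ℝ, ∫ y : {j : Fin d // j ≠ i} → ℝ,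
      φ (fun j => if hj : j = i then t else y ⟨j, hj⟩) := by
  classical
  haveI : Unique {j : Fin d // j = i} := ⟨⟨⟨i, rfl⟩⟩, fun j => Subtype.ext j.2⟩
  set E : (Fin d → ℝ) ≃ᵐ ℝ × ({j : Fin d // j ≠ i} → ℝ) :=
    (MeasurableEquiv.piEquivPiSubtypeProd (fun _ : Fin d => ℝ) (fun j => j = i)).trans
      ((MeasurableEquiv.funUnique {j : Fin d // j = i} ℝ).prodCongr (MeasurableEquiv.refl _))
    with hE
  have hmp : MeasurePreserving E volume volume := by
    refine (MeasureTheory.volume_preserving_piEquivPiSubtypeProd (fun _ : Fin d => ℝ)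
        (fun j => j = i)).trans ?_
    have key := (MeasureTheory.volume_preserving_funUnique {j : Fin d // j = i} ℝ).prod
        (MeasurePreserving.id (volume : Measure ({j : Fin d // j ≠ i} → ℝ)))
    have hfun : ⇑((MeasurableEquiv.funUnique {j : Fin d // j = i} ℝ).prodCongr
        (MeasurableEquiv.refl ({j : Fin d // j ≠ i} → ℝ)))
        = Prod.map (⇑(MeasurableEquiv.funUnique {j : Fin d // j = i} ℝ)) id := by
      funext w; cases w; rfl
    rw [hfun]
    convert key using 2
    · rfl
    · exact congrArg₂ Measure.prod (vol_pi_eq _ _) (vol_pi_eq _ _)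
    · rfl
  have h1 := ((hmp.symm E).integral_comp E.symm.measurableEmbedding φ).symm
  have hint := ((hmp.symm E).integrable_comp_emb E.symm.measurableEmbedding).mpr hφ
  rw [h1]
  have hint' : Integrable (fun w : ℝ × ({j : Fin d // j ≠ i} → ℝ) => φ (E.symm w))
      ((volume : Measure ℝ).prod volume) := by exact hint
  rw [show (volume : Measure (ℝ × ({j : Fin d // j ≠ i} → ℝ)))
      = (volume : Measure ℝ).prod volume from rfl,
    MeasureTheory.integral_prod _ hint']
  have hE2 : ∀ (t : ℝ) (y : {j : Fin d // j ≠ i} → ℝ),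
      E.symm (t, y) = (fun j => if hj : j = i then t else y ⟨j, hj⟩) := by
    intro t y
    funext j
    show (Equiv.piEquivPiSubtypeProd (fun j : Fin d => j = i) (fun _ => ℝ)).symm
        ((fun _ => t : {j : Fin d // j = i} → ℝ), y) j = _
    rw [Equiv.piEquivPiSubtypeProd_symm_apply]
  simp only [hE2]

/-- From an L^p-modulus of f one obtains a singularity modulus of the function f_i
obtained by integrating out all variables except the i-th. -/
theorem stmt5 (d : ℕ) (Ω : Set (Fin d → ℝ)) (hΩm : MeasurableSet Ω)
    (hΩb : Bornology.IsBounded Ω) (hΩpos : 0 < volume Ω)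
    (p : ℝ) (hp : 1 ≤ p) (f : (Fin d → ℝ) → ℝ)
    (hsupp : ∀ x, x ∉ Ω → f x = 0)
    (hf : MemLp f (ENNReal.ofReal p) volume)
    (μ : ℕ → ℕ)
    (hμ : ∀ n : ℕ, ∀ h : Fin d → ℝ, ‖h‖ ≤ (2:ℝ) ^ (-(μ n : ℤ)) →
      eLpNorm (fun x => f x - f (x + h)) (ENNReal.ofReal p) volume <
        ENNReal.ofReal ((2:ℝ) ^ (-(n : ℤ))))
    (i : Fin d) :
    ∀ n : ℕ, ∀ x h : ℝ,
      |h| ≤ (2:ℝ) ^ (-(μ (n + 1 + ⌈Real.logb 2 (volume Ω).toReal⌉.toNat +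
            (d - 1) * ⌈Real.logb 2 (Metric.diam Ω)⌉.toNat) : ℤ)) →
      |∫ t in Set.uIcc x (x + h),
          ∫ y : {j : Fin d // j ≠ i} → ℝ,
            f (fun j => if hj : j = i then t else y ⟨j, hj⟩)| < (2:ℝ) ^ (-(n : ℤ)) := by
  classical
  intro n x h hh
  set A : ℕ := ⌈Real.logb 2 (volume Ω).toReal⌉.toNat with hA
  set B : ℕ := (d - 1) * ⌈Real.logb 2 (Metric.diam Ω)⌉.toNat with hB
  set N : ℕ := n + 1 + A + B with hN
  set q : ℝ≥0∞ := ENNReal.ofReal p with hq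
  have hq1 : 1 ≤ q := ENNReal.one_le_ofReal.mpr hp
  have hqt : q.toReal = p := ENNReal.toReal_ofReal (by linarith)
  have hΩfin : volume Ω < ⊤ := hΩb.measure_lt_top
  -- f is integrable
  have hfint : Integrable f (volume : Measure (Fin d → ℝ)) := by
    have h0 : f = Ω.indicator f := by
      funext z
      by_cases hz : z ∈ Ω
      · simp [Set.indicator_of_mem hz]
      · simp [Set.indicator_of_notMem hz, hsupp z hz]
    rw [h0, integrable_indicator_iff hΩm]
    haveI : IsFiniteMeasure (volume.restrict Ω) :=
      ⟨by rwa [Measure.restrict_apply_univ]⟩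
    exact (hf.restrict Ω).integrable hq1
  -- endpoints
  set a : ℝ := x ⊓ (x + h) with ha
  set b : ℝ := x ⊔ (x + h) with hb
  have hab : a ≤ b := inf_le_sup
  set c : ℝ := b - a with hcdef
  have hc : c = |h| := by
    have h1 := max_sub_min_eq_abs x (x + h)
    rw [show x + h - x = h by ring] at h1
    rw [hcdef, ha, hb]
    exact h1
  have hbac : b = a + c := by rw [hcdef]; ring
  have hcnn : 0 ≤ c := by rw [hc]; exact abs_nonneg h
  -- shift vector
  set v : Fin d → ℝ := Pi.single i c with hv
  have hvnorm : ‖v‖ ≤ (2:ℝ) ^ (-(μ N : ℤ)) := by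
    rw [pi_norm_le_iff_of_nonneg (by positivity)]
    intro j
    rw [hv, Pi.single_apply]
    by_cases hj : j = i
    · simpa [hj, Real.norm_eq_abs, abs_of_nonneg hcnn, hc] using hh
    · rw [if_neg hj, norm_zero]
      positivity
  -- the modulus bound
  have hE0 := hμ N v hvnorm
  set g : (Fin d → ℝ) → ℝ := fun z => f (z + v) - f z with hg
  have hgf : g = -(fun z => f z - f (z + v)) := by
    funext z; simp [hg]
  have hE : eLpNorm g q volume < ENNReal.ofReal ((2:ℝ) ^ (-(N : ℤ))) := by
    rw [hgf, eLpNorm_neg]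
    exact hE0
  have hgmeas : AEStronglyMeasurable g volume :=
    (hf.1.comp_measurePreserving (measurePreserving_add_right volume v)).sub hf.1
  have hgint : Integrable g volume := (hfint.comp_add_right v).sub hfint
  -- support of g
  set S : Set (Fin d → ℝ) := Ω ∪ ((fun z => z + v) ⁻¹' Ω) with hS
  have hSm : MeasurableSet S := hΩm.union (hΩm.preimage (measurable_add_const v))
  have hg0 : ∀ z ∉ S, g z = 0 := by
    intro z hz
    rw [hS, Set.mem_union] at hz
    push_neg at hz
    have h2 : z + v ∉ Ω := hz.2
    show f (z + v) - f z = 0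
    rw [hsupp _ h2, hsupp _ hz.1, sub_zero]
  have hSvol : volume S ≤ volume Ω + volume Ω := by
    refine (measure_union_le _ _).trans ?_
    rw [measure_preimage_add_right]
  -- indicator functions
  set χIoc : ℝ → ℝ := (Set.Ioc a b).indicator 1 with hχIoc
  set χb : ℝ → ℝ := (Set.Iic b).indicator 1 with hχb
  set χa : ℝ → ℝ := (Set.Iic a).indicator 1 with hχa
  have hindint : ∀ (s : Set ℝ), MeasurableSet s → ∀ (ψ : (Fin d → ℝ) → ℝ),
      Integrable ψ (volume : Measure (Fin d → ℝ)) →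
      Integrable (fun z => s.indicator (1 : ℝ → ℝ) (z i) * ψ z) volume := by
    intro s hs ψ hψ
    have key : (fun z : Fin d → ℝ => s.indicator (1 : ℝ → ℝ) (z i) * ψ z)
        = ((fun z : Fin d → ℝ => z i) ⁻¹' s).indicator ψ := by
      funext z
      by_cases hz : z i ∈ s
      · simp [Set.indicator_of_mem, hz]
      · simp [Set.indicator_of_notMem, hz]
    rw [key]
    exact hψ.indicator (hs.preimage (measurable_pi_apply i))
  set F : ℝ → ℝ := fun t => ∫ y : {j : Fin d // j ≠ i} → ℝ,
      f (fun j => if hj : j = i then t else y ⟨j, hj⟩) with hF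
  set φ : (Fin d → ℝ) → ℝ := fun z => χIoc (z i) * f z with hφdef
  have hφint : Integrable φ volume := hindint _ measurableSet_Ioc f hfint
  -- Step 1-2 : the target integral equals ∫ φ
  have step12 : ∫ t in Set.uIcc x (x + h), F t = ∫ z, φ z := by
    have e1 : ∫ t in Set.uIcc x (x + h), F t = ∫ t in Set.Ioc a b, F t := by
      rw [Set.uIcc, ← ha, ← hb]
      exact MeasureTheory.integral_Icc_eq_integral_Ioc
    have e2 : ∫ z, φ z = ∫ t : ℝ, χIoc t * F t := by
      rw [fubini_slice i φ hφint]
      congr 1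
      funext t
      have : ∀ y : {j : Fin d // j ≠ i} → ℝ,
          φ (fun j => if hj : j = i then t else y ⟨j, hj⟩)
          = χIoc t * f (fun j => if hj : j = i then t else y ⟨j, hj⟩) := by
        intro y
        have hi : ((fun j : Fin d => if hj : j = i then t else y ⟨j, hj⟩) i) = t := by simp
        rw [hφdef]
        show χIoc ((fun j : Fin d => if hj : j = i then t else y ⟨j, hj⟩) i) * f _ = _
        rw [hi]
      rw [hF]
      simp only [this]
      exact integral_const_mul _ _
    rw [e1, e2, ← integral_indicator measurableSet_Ioc]
    congr 1
    funext t
    by_cases ht : t ∈ Set.Ioc a b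
    · simp [Set.indicator_of_mem ht, hχIoc]
    · simp [Set.indicator_of_notMem ht, hχIoc]
  -- Step 3-5 : ∫ φ = ∫ χa (z i) * g z
  have hsplitχ : ∀ t : ℝ, χIoc t = χb t - χa t := by
    intro t
    rw [hχIoc, hχb, hχa]
    simp only [Set.indicator_apply, Set.mem_Ioc, Set.mem_Iic, Pi.one_apply]
    by_cases h1 : t ≤ a
    · rw [if_neg (by rintro ⟨hc1, -⟩; linarith), if_pos (le_trans h1 hab), if_pos h1]
      norm_num
    · by_cases h2 : t ≤ b
      · rw [if_pos ⟨lt_of_not_ge h1, h2⟩, if_pos h2, if_neg h1]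
        norm_num
      · rw [if_neg (fun hcon => h2 hcon.2), if_neg h2, if_neg h1]
        norm_num
  have hχshift : ∀ t : ℝ, χb (t + c) = χa t := by
    intro t
    rw [hχb, hχa]
    simp only [Set.indicator_apply, Set.mem_Iic, Pi.one_apply]
    have : t + c ≤ b ↔ t ≤ a := by constructor <;> intro <;> linarith [hbac]
    simp [this]
  have hintb : Integrable (fun z : Fin d → ℝ => χb (z i) * f z) volume :=
    hindint _ measurableSet_Iic f hfint
  have hinta : Integrable (fun z : Fin d → ℝ => χa (z i) * f z) volume :=
    hindint _ measurableSet_Iic f hfint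
  have hintav : Integrable (fun z : Fin d → ℝ => χa (z i) * f (z + v)) volume :=
    hindint _ measurableSet_Iic _ (hfint.comp_add_right v)
  have step4 : ∫ z, χb (z i) * f z = ∫ z, χa (z i) * f (z + v) := by
    have := MeasureTheory.integral_add_right_eq_self
      (μ := (volume : Measure (Fin d → ℝ))) (fun z => χb (z i) * f z) v
    rw [← this]
    congr 1
    funext z
    have hzv : (z + v) i = z i + c := by
      rw [Pi.add_apply, hv, Pi.single_eq_same]
    rw [hzv, hχshift]
  have step35 : ∫ z, φ z = ∫ z, χa (z i) * g z := by
    have e3 : ∫ z, φ z = (∫ z, χb (z i) * f z) - ∫ z, χa (z i) * f z := by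
      rw [← integral_sub hintb hinta]
      congr 1
      funext z
      simp only [hφdef]
      rw [hsplitχ, sub_mul]
    rw [e3, step4, ← integral_sub hintav hinta]
    congr 1
    funext z
    simp only [hg]
    rw [mul_sub]
  -- Step 6 : bound by L¹ norm of g
  have hgabs : Integrable (fun z => ‖g z‖) volume := hgint.norm
  have step6 : |∫ z, χa (z i) * g z| ≤ ∫ z, ‖g z‖ := by
    rw [← Real.norm_eq_abs]
    refine (norm_integral_le_integral_norm _).trans ?_
    refine integral_mono ((hindint _ measurableSet_Iic g hgint).norm) hgabs ?_
    intro z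
    show ‖χa (z i) * g z‖ ≤ ‖g z‖
    rw [norm_mul]
    have h1 : ‖χa (z i)‖ ≤ 1 := by
      rw [hχa]
      by_cases hz : z i ∈ Set.Iic a
      · simp [Set.indicator_of_mem hz]
      · simp [Set.indicator_of_notMem hz]
    calc ‖χa (z i)‖ * ‖g z‖ ≤ 1 * ‖g z‖ :=
          mul_le_mul_of_nonneg_right h1 (norm_nonneg _)
      _ = ‖g z‖ := one_mul _
  -- Step 7 : ENNReal chain
  set r : ℝ := 1 - 1 / p with hr
  have hr0 : 0 ≤ r := by
    rw [hr]
    have : 1 / p ≤ 1 := by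
      rw [div_le_one (by linarith)]; linarith
    linarith
  have hr1 : r ≤ 1 := by
    rw [hr]
    have : 0 ≤ 1 / p := by positivity
    linarith
  have hH : eLpNorm g 1 (volume.restrict S) ≤
      eLpNorm g q (volume.restrict S) * (volume S) ^ r := by
    have := eLpNorm_le_eLpNorm_mul_rpow_measure_univ (μ := volume.restrict S)
      hq1 (hgmeas.restrict)
    rwa [Measure.restrict_apply_univ, ENNReal.toReal_one, hqt, one_div_one, ← hr] at this
  have hL1 : ENNReal.ofReal (∫ z, ‖g z‖) = eLpNorm g 1 (volume.restrict S) := by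
    rw [MeasureTheory.ofReal_integral_norm_eq_lintegral_enorm hgint,
      eLpNorm_one_eq_lintegral_enorm]
    rw [← lintegral_indicator hSm]
    congr 1
    funext z
    by_cases hz : z ∈ S
    · simp [Set.indicator_of_mem hz]
    · simp [Set.indicator_of_notMem hz, hg0 z hz]
  -- volume bound
  have hVA : (volume Ω).toReal ≤ (2:ℝ) ^ A := by
    by_cases hV1 : (volume Ω).toReal ≤ 1
    · exact hV1.trans (one_le_pow₀ (by norm_num))
    · push_neg at hV1
      have h1 : Real.logb 2 (volume Ω).toReal ≤ (⌈Real.logb 2 (volume Ω).toReal⌉ : ℝ) :=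
        Int.le_ceil _
      have h2 : ((⌈Real.logb 2 (volume Ω).toReal⌉ : ℤ) : ℝ)
          ≤ ((⌈Real.logb 2 (volume Ω).toReal⌉.toNat : ℕ) : ℝ) := by
        exact_mod_cast Int.self_le_toNat _
      have hlog : Real.logb 2 (volume Ω).toReal ≤ (A : ℝ) := by
        rw [hA]; linarith
      calc (volume Ω).toReal = (2:ℝ) ^ Real.logb 2 (volume Ω).toReal :=
            (Real.rpow_logb two_pos (by norm_num) (by linarith)).symm
        _ ≤ (2:ℝ) ^ (A : ℝ) := Real.rpow_le_rpow_of_exponent_le one_le_two hlog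
        _ = (2:ℝ) ^ A := by rw [Real.rpow_natCast]
  have hΩA : volume Ω ≤ ENNReal.ofReal ((2:ℝ) ^ A) := by
    have h3 := ENNReal.ofReal_le_ofReal hVA
    rwa [ENNReal.ofReal_toReal hΩfin.ne] at h3
  have hS2 : volume S ≤ ENNReal.ofReal ((2:ℝ) ^ (1 + A)) := by
    refine hSvol.trans ?_
    calc volume Ω + volume Ω ≤ ENNReal.ofReal ((2:ℝ) ^ A) + ENNReal.ofReal ((2:ℝ) ^ A) :=
          add_le_add hΩA hΩA
      _ = ENNReal.ofReal ((2:ℝ) ^ A + (2:ℝ) ^ A) := (ENNReal.ofReal_add (by positivity) (by positivity)).symm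
      _ = ENNReal.ofReal ((2:ℝ) ^ (1 + A)) := by
          congr 1
          rw [pow_add]
          ring
  have hone : (1:ℝ≥0∞) ≤ ENNReal.ofReal ((2:ℝ) ^ (1 + A)) :=
    ENNReal.one_le_ofReal.mpr (one_le_pow₀ (by norm_num))
  have hM : (volume S) ^ r ≤ ENNReal.ofReal ((2:ℝ) ^ (1 + A)) := by
    by_cases hS1 : volume S ≤ 1
    · calc (volume S) ^ r ≤ (1:ℝ≥0∞) ^ r := ENNReal.rpow_le_rpow hS1 hr0
        _ = 1 := ENNReal.one_rpow _
        _ ≤ _ := hone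
    · push_neg at hS1
      calc (volume S) ^ r ≤ (volume S) ^ (1:ℝ) :=
            ENNReal.rpow_le_rpow_of_exponent_le hS1.le hr1
        _ = volume S := ENNReal.rpow_one _
        _ ≤ _ := hS2
  -- final chain
  have hcnez : ENNReal.ofReal ((2:ℝ) ^ (1 + A)) ≠ 0 := by
    rw [Ne, ENNReal.ofReal_eq_zero, not_le]
    positivity
  have hcnet : ENNReal.ofReal ((2:ℝ) ^ (1 + A)) ≠ ⊤ := ENNReal.ofReal_ne_top
  have key : ENNReal.ofReal |∫ t in Set.uIcc x (x + h), F t| <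
      ENNReal.ofReal ((2:ℝ) ^ (-(n : ℤ))) := by
    calc ENNReal.ofReal |∫ t in Set.uIcc x (x + h), F t|
        ≤ ENNReal.ofReal (∫ z, ‖g z‖) := by
          refine ENNReal.ofReal_le_ofReal ?_
          rw [step12, step35]
          exact step6
      _ = eLpNorm g 1 (volume.restrict S) := hL1
      _ ≤ eLpNorm g q (volume.restrict S) * (volume S) ^ r := hH
      _ ≤ eLpNorm g q volume * ENNReal.ofReal ((2:ℝ) ^ (1 + A)) :=
          mul_le_mul' (eLpNorm_mono_measure _ Measure.restrict_le_self) hM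
      _ < ENNReal.ofReal ((2:ℝ) ^ (-(N : ℤ))) * ENNReal.ofReal ((2:ℝ) ^ (1 + A)) :=
          (mul_comm _ _).trans_lt ((ENNReal.mul_lt_mul_right hcnez hcnet hE).trans_eq (mul_comm _ _))
      _ = ENNReal.ofReal ((2:ℝ) ^ (-(N : ℤ)) * (2:ℝ) ^ (1 + A)) :=
          (ENNReal.ofReal_mul (by positivity)).symm
      _ ≤ ENNReal.ofReal ((2:ℝ) ^ (-(n : ℤ))) := by
          refine ENNReal.ofReal_le_ofReal ?_
          have hzp : (2:ℝ) ^ (1 + A) = (2:ℝ) ^ ((1 + A : ℕ) : ℤ) := by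
            rw [zpow_natCast]
          rw [hzp, ← zpow_add₀ (two_ne_zero)]
          refine zpow_le_zpow_right₀ one_le_two ?_
          rw [hN]
          push_cast
          omega
  rw [← ENNReal.ofReal_lt_ofReal_iff (by positivity)]
  exact key
end

section
/- Let f ∈ L^p(ℝ^d) with 1 ≤ p < ∞, and define the continuous approximations f_m(x) := 2^{dm} ∫_{Q(x,m)} f dλ, where Q(x,m) = x + [−2^{−m−1}, 2^{−m−1}]^d. If μ is an L^p-modulus of f, then for all x, y ∈ ℝ^d with |x − y|_∞ ≤ 2^{−μ(n + ⌈d/p⌉ m)} one has |f_m(x) − f_m(y)| < 2^{−n}; i.e., n ↦ μ(n + ⌈d/p⌉ m) is a modulus of continuity of f_m. -/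
open MeasureTheory
open scoped ENNReal

/-- Modulus of continuity of the continuous approximations
f_m(x) = 2^{dm} ∫_{Q(x,m)} f dλ obtained from an L^p-modulus of f. -/
theorem stmt6 (d : ℕ) (p : ℝ) (hp : 1 ≤ p) (f : (Fin d → ℝ) → ℝ)
    (hf : MemLp f (ENNReal.ofReal p) volume)
    (μ : ℕ → ℕ)
    (hμ : ∀ n : ℕ, ∀ h : Fin d → ℝ, ‖h‖ ≤ (2:ℝ) ^ (-(μ n : ℤ)) →
      eLpNorm (fun x => f x - f (x + h)) (ENNReal.ofReal p) volume <
        ENNReal.ofReal ((2:ℝ) ^ (-(n : ℤ))))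
    (m : ℕ) :
    ∀ n : ℕ, ∀ x y : Fin d → ℝ,
      ‖x - y‖ ≤ (2:ℝ) ^ (-(μ (n + ⌈(d:ℝ)/p⌉₊ * m) : ℤ)) →
      |(2:ℝ) ^ (d * m) *
          (∫ t in Set.Icc (fun i => x i - 2 ^ (-(m:ℤ) - 1)) (fun i => x i + 2 ^ (-(m:ℤ) - 1)), f t) -
        (2:ℝ) ^ (d * m) *
          (∫ t in Set.Icc (fun i => y i - 2 ^ (-(m:ℤ) - 1)) (fun i => y i + 2 ^ (-(m:ℤ) - 1)), f t)|
        < (2:ℝ) ^ (-(n : ℤ)) := by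
  intro n x y hxy
  have hp0 : (0:ℝ) < p := lt_of_lt_of_le one_pos hp
  set c : ℝ := (2:ℝ) ^ (-(m:ℤ) - 1) with hc
  set k : ℕ := ⌈(d:ℝ)/p⌉₊ with hk
  set N : ℕ := n + k * m with hN
  set h : Fin d → ℝ := y - x with hhdef
  set P : ℝ≥0∞ := ENNReal.ofReal p with hPdef
  have hP1 : (1:ℝ≥0∞) ≤ P := by
    rw [hPdef]; exact ENNReal.one_le_ofReal.mpr hp
  have hPreal : P.toReal = p := ENNReal.toReal_ofReal hp0.le
  have hnorm : ‖h‖ ≤ (2:ℝ) ^ (-(μ N : ℤ)) := by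
    rw [hhdef, norm_sub_rev]; exact hxy
  set g : (Fin d → ℝ) → ℝ := fun t => f t - f (t + h) with hgdef
  have hg : eLpNorm g P volume < ENNReal.ofReal ((2:ℝ) ^ (-(N:ℤ))) := hμ N h hnorm
  have hfh : MemLp (fun t => f (t + h)) P volume :=
    hf.comp_measurePreserving (measurePreserving_add_right volume h)
  have hgmem : MemLp g P volume := hf.sub hfh
  -- the cube
  set Q : Set (Fin d → ℝ) := Set.Icc (fun i => x i - c) (fun i => x i + c) with hQ
  have hcpos : (0:ℝ) < c := by rw [hc]; positivity
  have hQvol : volume Q = (ENNReal.ofReal ((2:ℝ) ^ (-(m:ℤ)))) ^ d := by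
    rw [hQ, Real.volume_Icc_pi]
    have h1 : ∀ i : Fin d, (x i + c) - (x i - c) = (2:ℝ) ^ (-(m:ℤ)) := by
      intro i
      have h2 : (2:ℝ) ^ (-(m:ℤ) - 1) = (2:ℝ) ^ (-(m:ℤ)) / 2 := by
        rw [zpow_sub₀ (two_ne_zero : (2:ℝ) ≠ 0), zpow_one]
      rw [hc, h2]; ring
    simp [h1]
  have hQfin : volume Q ≠ ⊤ := by
    rw [hQvol]; exact ENNReal.pow_ne_top ENNReal.ofReal_ne_top
  haveI : IsFiniteMeasure (volume.restrict Q) :=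
    ⟨by rwa [Measure.restrict_apply_univ, lt_top_iff_ne_top]⟩
  have hfQ : Integrable f (volume.restrict Q) := (hf.restrict Q).integrable hP1
  have hfhQ : Integrable (fun t => f (t + h)) (volume.restrict Q) := (hfh.restrict Q).integrable hP1
  have hgQ : Integrable g (volume.restrict Q) := hfQ.sub hfhQ
  -- translation
  have trans_eq : (∫ t in Set.Icc (fun i => y i - c) (fun i => y i + c), f t)
      = ∫ t in Q, f (t + h) := by
    have e : MeasurePreserving (fun t : Fin d → ℝ => t + h) volume volume :=
      measurePreserving_add_right volume h
    have emb : MeasurableEmbedding (fun t : Fin d → ℝ => t + h) :=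
      (MeasurableEquiv.addRight h).measurableEmbedding
    have ha : ((fun i => y i - c) - h) = (fun i => x i - c) := by
      funext i; simp only [hhdef, Pi.sub_apply]; ring
    have hb : ((fun i => y i + c) - h) = (fun i => x i + c) := by
      funext i; simp only [hhdef, Pi.sub_apply]; ring
    rw [← e.setIntegral_preimage_emb emb, Set.preimage_add_const_Icc, ha, hb]
  -- difference as single integral
  have key : (2:ℝ) ^ (d * m) *
          (∫ t in Set.Icc (fun i => x i - c) (fun i => x i + c), f t) -
        (2:ℝ) ^ (d * m) *
          (∫ t in Set.Icc (fun i => y i - c) (fun i => y i + c), f t)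
      = (2:ℝ) ^ (d * m) * ∫ t in Q, g t := by
    rw [trans_eq, ← mul_sub, ← integral_sub hfQ hfhQ]
  rw [key]
  -- bound |∫ g| by L1 norm
  have hI : |∫ t in Q, g t| ≤ (eLpNorm g 1 (volume.restrict Q)).toReal := by
    calc |∫ t in Q, g t| ≤ ∫ t in Q, ‖g t‖ := by
          rw [← Real.norm_eq_abs]; exact norm_integral_le_integral_norm _
    _ = (eLpNorm g 1 (volume.restrict Q)).toReal := by
          rw [eLpNorm_one_eq_lintegral_enorm,
            ← ofReal_integral_norm_eq_lintegral_enorm hgQ,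
            ENNReal.toReal_ofReal (integral_nonneg fun t => norm_nonneg _)]
  -- Hölder
  set e : ℝ := 1 - 1/p with he
  have he0 : 0 ≤ e := by
    rw [he]; have : 1/p ≤ 1 := by
      rw [div_le_one hp0]; exact hp
    linarith
  have hHolder : eLpNorm g 1 (volume.restrict Q)
      ≤ eLpNorm g P volume * (volume Q) ^ e := by
    calc eLpNorm g 1 (volume.restrict Q)
        ≤ eLpNorm g P (volume.restrict Q) *
            (volume.restrict Q Set.univ) ^ (1/(1:ℝ≥0∞).toReal - 1/P.toReal) :=
          eLpNorm_le_eLpNorm_mul_rpow_measure_univ hP1 hgQ.aestronglyMeasurable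
    _ = eLpNorm g P (volume.restrict Q) * (volume Q) ^ e := by
          rw [Measure.restrict_apply_univ, hPreal]
          norm_num [he]
    _ ≤ eLpNorm g P volume * (volume Q) ^ e := by
          gcongr
          exact Measure.restrict_le_self
  have hSfin : eLpNorm g P volume ≠ ⊤ := (hg.trans_le le_top).ne
  have hVefin : (volume Q) ^ e ≠ ⊤ := ENNReal.rpow_ne_top_of_nonneg he0 hQfin
  -- real-valued quantities
  set S : ℝ := (eLpNorm g P volume).toReal with hS
  have hSlt : S < (2:ℝ) ^ (-(N:ℤ)) := by
    rw [hS]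
    exact ENNReal.toReal_lt_of_lt_ofReal hg
  have hS0 : 0 ≤ S := ENNReal.toReal_nonneg
  set Vr : ℝ := ((2:ℝ) ^ (-(m:ℤ))) ^ d with hVr
  have hVrtoReal : (volume Q).toReal = Vr := by
    rw [hQvol, hVr, ENNReal.toReal_pow, ENNReal.toReal_ofReal (by positivity)]
  have hVe : ((volume Q) ^ e).toReal = Vr ^ e := by
    rw [← hVrtoReal, ← ENNReal.toReal_rpow]
  have hVrpos : 0 < Vr := by rw [hVr]; positivity
  have hVepos : 0 < Vr ^ e := Real.rpow_pos_of_pos hVrpos e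
  have hI2 : |∫ t in Q, g t| ≤ S * Vr ^ e := by
    refine hI.trans ?_
    calc (eLpNorm g 1 (volume.restrict Q)).toReal
        ≤ (eLpNorm g P volume * (volume Q) ^ e).toReal :=
          ENNReal.toReal_mono (ENNReal.mul_ne_top hSfin hVefin) hHolder
    _ = S * Vr ^ e := by rw [ENNReal.toReal_mul, hVe]
  -- final estimate
  have hA : (0:ℝ) < (2:ℝ) ^ (d * m) := by positivity
  have step1 : (2:ℝ) ^ (d * m) * |∫ t in Q, g t| < (2:ℝ) ^ (d * m) * ((2:ℝ) ^ (-(N:ℤ)) * Vr ^ e) := by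
    calc (2:ℝ) ^ (d * m) * |∫ t in Q, g t| ≤ (2:ℝ) ^ (d * m) * (S * Vr ^ e) := by
          exact mul_le_mul_of_nonneg_left hI2 hA.le
    _ < (2:ℝ) ^ (d * m) * ((2:ℝ) ^ (-(N:ℤ)) * Vr ^ e) := by
          apply mul_lt_mul_of_pos_left _ hA
          exact mul_lt_mul_of_pos_right hSlt hVepos
  have step2 : (2:ℝ) ^ (d * m) * ((2:ℝ) ^ (-(N:ℤ)) * Vr ^ e) ≤ (2:ℝ) ^ (-(n:ℤ)) := by
    -- rewrite everything as rpow
    have e1 : (2:ℝ) ^ (d * m) = (2:ℝ) ^ (((d*m : ℕ)):ℝ) :=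
      (Real.rpow_natCast (2:ℝ) (d*m)).symm
    have e2 : (2:ℝ) ^ (-(N:ℤ)) = (2:ℝ) ^ (-(N:ℝ)) := by
      rw [← Real.rpow_intCast (2:ℝ) (-(N:ℤ))]; congr 1; push_cast; ring
    have e3 : Vr ^ e = (2:ℝ) ^ ((-(m:ℝ)) * d * e) := by
      rw [hVr, ← Real.rpow_intCast (2:ℝ) (-(m:ℤ)), ← Real.rpow_natCast _ d,
        ← Real.rpow_mul (by norm_num : (0:ℝ) ≤ 2), ← Real.rpow_mul (by norm_num : (0:ℝ) ≤ 2)]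
      congr 1
      push_cast
      ring
    have e4 : (2:ℝ) ^ (-(n:ℤ)) = (2:ℝ) ^ (-(n:ℝ)) := by
      rw [← Real.rpow_intCast (2:ℝ) (-(n:ℤ))]; congr 1; push_cast; ring
    rw [e1, e2, e3, e4, ← Real.rpow_add (by norm_num : (0:ℝ) < 2),
      ← Real.rpow_add (by norm_num : (0:ℝ) < 2)]
    apply Real.rpow_le_rpow_of_exponent_le (by norm_num)
    -- exponent: d*m + (-N) + (-m)*d*e ≤ -n
    have hkm : (d:ℝ)/p * m ≤ (k:ℝ) * m := by
      have := Nat.le_ceil ((d:ℝ)/p)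
      have hm0 : (0:ℝ) ≤ m := Nat.cast_nonneg m
      nlinarith
    rw [he]
    push_cast [hN]
    have h2 : -(m:ℝ) * (d:ℝ) * (1 - 1/p) = -((m:ℝ)*(d:ℝ)) + (d:ℝ)/p*(m:ℝ) := by ring
    linarith [hkm, h2]
  rw [abs_mul, abs_of_nonneg hA.le]
  exact step1.trans_le step2
end

section
/- Let f ∈ L^1([0,1]) be weakly differentiable with weak derivative f′ ∈ L^p([0,1]), and let μ be an L^p-modulus of f′. Then n ↦ μ(n+1) is a modulus of continuity of the continuous representative of f: for all x, y ∈ [0,1], |x − y| ≤ 2^{−μ(n+1)} implies |f(x) − f(y)| < 2^{−n}. -/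
open MeasureTheory
open scoped ENNReal

private lemma stmt8_aux (p : ℝ) (hp : 1 ≤ p) (f f' : ℝ → ℝ)
    (hsupp' : ∀ x, x ∉ Set.Icc (0:ℝ) 1 → f' x = 0)
    (hf' : MemLp f' (ENNReal.ofReal p) volume)
    (hfund : ∀ x ∈ Set.Icc (0:ℝ) 1, ∀ y ∈ Set.Icc (0:ℝ) 1,
      f y - f x = ∫ t in x..y, f' t)
    (μ : ℕ → ℕ)
    (hμ : ∀ n : ℕ, ∀ h : ℝ, |h| ≤ (2:ℝ) ^ (-(μ n : ℤ)) →
      eLpNorm (fun x => f' x - f' (x + h)) (ENNReal.ofReal p) volume <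
        ENNReal.ofReal ((2:ℝ) ^ (-(n : ℤ))))
    (n : ℕ) (x : ℝ) (hx : x ∈ Set.Icc (0:ℝ) 1) (y : ℝ) (hy : y ∈ Set.Icc (0:ℝ) 1)
    (hxy : x ≤ y) (hd : y - x ≤ (2:ℝ) ^ (-(μ (n + 1) : ℤ))) :
    |f y - f x| < (2:ℝ) ^ (-(n : ℤ)) := by
  obtain ⟨hx0, hx1⟩ := hx
  obtain ⟨hy0, hy1⟩ := hy
  set δ : ℝ := y - x with hδ
  have hδ0 : 0 ≤ δ := by simp [hδ, hxy]
  have hδ1 : δ ≤ 1 := by simp only [hδ]; linarith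
  set q : ℝ≥0∞ := ENNReal.ofReal p with hq
  have h1q : (1 : ℝ≥0∞) ≤ q := by
    rw [hq, ← ENNReal.ofReal_one]
    exact ENNReal.ofReal_le_ofReal hp
  -- f' is globally integrable
  haveI : Fact (volume (Set.Icc (0:ℝ) 1) < ⊤) := ⟨by simp⟩
  have hindf' : f' = (Set.Icc (0:ℝ) 1).indicator f' := by
    funext t
    by_cases ht : t ∈ Set.Icc (0:ℝ) 1
    · rw [Set.indicator_of_mem ht]
    · rw [Set.indicator_of_notMem ht, hsupp' t ht]
  have hint : Integrable f' volume := by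
    rw [hindf']
    rw [integrable_indicator_iff measurableSet_Icc]
    have : MemLp f' q (volume.restrict (Set.Icc (0:ℝ) 1)) := hf'.restrict _
    exact memLp_one_iff_integrable.mp (this.mono_exponent h1q)
  have hintδ : Integrable (fun t => f' (t + δ)) volume := by
    have := ((measurePreserving_add_right volume δ).integrable_comp
      hint.aestronglyMeasurable).mpr hint
    exact this
  set g : ℝ → ℝ := fun t => f' t - f' (t + δ) with hg
  have hintg : Integrable g volume := hint.sub hintδ
  -- key identity : f y - f x = ∫ t in x..1, g t
  have hII : ∀ a b : ℝ, IntervalIntegrable f' volume a b := fun a b =>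
    hint.intervalIntegrable
  have hzero : (∫ t in (1:ℝ)..(1+δ), f' t) = 0 := by
    rw [intervalIntegral.integral_of_le (by linarith)]
    apply setIntegral_eq_zero_of_forall_eq_zero
    intro t ht
    exact hsupp' t (by simp only [Set.mem_Icc, not_and_or, not_le]; right; exact ht.1)
  have hkey : f y - f x = ∫ t in x..(1:ℝ), g t := by
    have hsub : (∫ t in x..(1:ℝ), g t)
        = (∫ t in x..(1:ℝ), f' t) - ∫ t in x..(1:ℝ), f' (t + δ) :=
      intervalIntegral.integral_sub (hII x 1) hintδ.intervalIntegrable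
    have hshift : (∫ t in x..(1:ℝ), f' (t + δ)) = ∫ t in y..(1+δ), f' t := by
      rw [intervalIntegral.integral_comp_add_right]
      congr 1
      simp [hδ]
    have hsplit1 : (∫ t in x..(1:ℝ), f' t)
        = (∫ t in x..y, f' t) + ∫ t in y..(1:ℝ), f' t :=
      (intervalIntegral.integral_add_adjacent_intervals (hII x y) (hII y 1)).symm
    have hsplit2 : (∫ t in y..(1+δ), f' t)
        = (∫ t in y..(1:ℝ), f' t) + ∫ t in (1:ℝ)..(1+δ), f' t :=
      (intervalIntegral.integral_add_adjacent_intervals (hII y 1) (hII 1 (1+δ))).symm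
    rw [hsub, hshift, hsplit1, hsplit2, hzero, hfund x ⟨hx0, hx1⟩ y ⟨hy0, hy1⟩]
    ring
  -- g vanishes outside Icc (-1) 1
  have hgsupp : g = (Set.Icc (-1:ℝ) 1).indicator g := by
    funext t
    by_cases ht : t ∈ Set.Icc (-1:ℝ) 1
    · rw [Set.indicator_of_mem ht]
    · rw [Set.indicator_of_notMem ht]
      simp only [Set.mem_Icc, not_and_or, not_le] at ht
      have h1 : f' t = 0 := by
        apply hsupp' t
        simp only [Set.mem_Icc, not_and_or, not_le]
        rcases ht with h | h
        · left; linarith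
        · right; exact h
      have h2 : f' (t + δ) = 0 := by
        apply hsupp' (t + δ)
        simp only [Set.mem_Icc, not_and_or, not_le]
        rcases ht with h | h
        · left; linarith
        · right; linarith
      simp [hg, h1, h2]
  -- the L^1 norm of g is small
  have hμg : eLpNorm g q volume < ENNReal.ofReal ((2:ℝ) ^ (-((n:ℤ) + 1))) := by
    have := hμ (n + 1) δ (by rwa [abs_of_nonneg hδ0])
    simpa [hg, Nat.cast_add] using this
  have hmeasg : AEStronglyMeasurable g volume := hintg.aestronglyMeasurable
  have hL1 : eLpNorm g 1 volume < ENNReal.ofReal ((2:ℝ) ^ (-(n:ℤ))) := by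
    have hrestr : eLpNorm g 1 volume
        = eLpNorm g 1 (volume.restrict (Set.Icc (-1:ℝ) 1)) := by
      conv_lhs => rw [hgsupp]
      exact eLpNorm_indicator_eq_eLpNorm_restrict measurableSet_Icc
    have hcomp : eLpNorm g 1 (volume.restrict (Set.Icc (-1:ℝ) 1))
        ≤ eLpNorm g q (volume.restrict (Set.Icc (-1:ℝ) 1))
          * (volume.restrict (Set.Icc (-1:ℝ) 1) Set.univ)
            ^ (1 / (1:ℝ≥0∞).toReal - 1 / q.toReal) :=
      eLpNorm_le_eLpNorm_mul_rpow_measure_univ h1q (hmeasg.restrict)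
    have hmeas2 : (volume.restrict (Set.Icc (-1:ℝ) 1)) Set.univ = 2 := by
      rw [Measure.restrict_apply MeasurableSet.univ, Set.univ_inter, Real.volume_Icc]
      norm_num
    have hexp : (1 / (1:ℝ≥0∞).toReal - 1 / q.toReal) ≤ 1 := by
      have hqtr : q.toReal = p := ENNReal.toReal_ofReal (by linarith)
      rw [hqtr]
      simp only [ENNReal.toReal_one]
      have : 0 ≤ 1 / p := by positivity
      linarith
    have hpow : ((2:ℝ≥0∞)) ^ (1 / (1:ℝ≥0∞).toReal - 1 / q.toReal) ≤ 2 := by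
      calc ((2:ℝ≥0∞)) ^ (1 / (1:ℝ≥0∞).toReal - 1 / q.toReal)
          ≤ (2:ℝ≥0∞) ^ (1:ℝ) := ENNReal.rpow_le_rpow_of_exponent_le (by norm_num) hexp
        _ = 2 := by simp
    have hstep : eLpNorm g 1 volume ≤ eLpNorm g q volume * 2 := by
      rw [hrestr]
      refine hcomp.trans ?_
      rw [hmeas2]
      exact mul_le_mul (eLpNorm_mono_measure g Measure.restrict_le_self) hpow zero_le
        zero_le
    refine hstep.trans_lt ?_
    calc eLpNorm g q volume * 2
        < ENNReal.ofReal ((2:ℝ) ^ (-((n:ℤ) + 1))) * 2 := by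
          exact ENNReal.mul_lt_mul_left (by norm_num) (by norm_num) hμg
      _ = ENNReal.ofReal ((2:ℝ) ^ (-(n:ℤ))) := by
          rw [← ENNReal.ofReal_ofNat, ← ENNReal.ofReal_mul (by positivity)]
          congr 1
          rw [show (-(n:ℤ)) = (-((n:ℤ)+1)) + 1 by ring, zpow_add₀ (two_ne_zero)]
          norm_num
  -- conclude
  have hintnorm : Integrable (fun t => |g t|) volume := hintg.abs
  have hofReal : ENNReal.ofReal (∫ t, ‖g t‖) = eLpNorm g 1 volume := by
    rw [eLpNorm_one_eq_lintegral_enorm]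
    exact ofReal_integral_norm_eq_lintegral_enorm hintg
  have hnormlt : (∫ t, |g t|) < (2:ℝ) ^ (-(n:ℤ)) := by
    have : ENNReal.ofReal (∫ t, |g t|) < ENNReal.ofReal ((2:ℝ) ^ (-(n:ℤ))) := by
      have : (∫ t, |g t|) = ∫ t, ‖g t‖ := by simp [Real.norm_eq_abs]
      rw [this, hofReal]
      exact hL1
    exact (ENNReal.ofReal_lt_ofReal_iff (by positivity)).mp this
  rw [hkey]
  have hx1' : x ≤ 1 := hx1
  calc |∫ t in x..(1:ℝ), g t| ≤ ∫ t in x..(1:ℝ), |g t| := by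
        simpa [Real.norm_eq_abs] using intervalIntegral.norm_integral_le_integral_norm
          (f := g) (μ := volume) hx1'
    _ ≤ ∫ t, |g t| := by
        rw [intervalIntegral.integral_of_le hx1']
        exact setIntegral_le_integral hintnorm
          (Filter.Eventually.of_forall fun t => abs_nonneg _)
    _ < (2:ℝ) ^ (-(n:ℤ)) := hnormlt

/-- If f is weakly differentiable on [0,1] with derivative f' (extended by zero)
having L^p-modulus μ, then n ↦ μ(n+1) is a modulus of continuity of f. -/
theorem stmt8 (p : ℝ) (hp : 1 ≤ p) (f f' : ℝ → ℝ)
    (hsupp' : ∀ x, x ∉ Set.Icc (0:ℝ) 1 → f' x = 0)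
    (hf' : MemLp f' (ENNReal.ofReal p) volume)
    (hfund : ∀ x ∈ Set.Icc (0:ℝ) 1, ∀ y ∈ Set.Icc (0:ℝ) 1,
      f y - f x = ∫ t in x..y, f' t)
    (μ : ℕ → ℕ)
    (hμ : ∀ n : ℕ, ∀ h : ℝ, |h| ≤ (2:ℝ) ^ (-(μ n : ℤ)) →
      eLpNorm (fun x => f' x - f' (x + h)) (ENNReal.ofReal p) volume <
        ENNReal.ofReal ((2:ℝ) ^ (-(n : ℤ)))) :
    ∀ n : ℕ, ∀ x ∈ Set.Icc (0:ℝ) 1, ∀ y ∈ Set.Icc (0:ℝ) 1,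
      |x - y| ≤ (2:ℝ) ^ (-(μ (n + 1) : ℤ)) → |f x - f y| < (2:ℝ) ^ (-(n : ℤ)) := by
  intro n x hx y hy hdist
  rcases le_total x y with hxy | hxy
  · rw [abs_sub_comm]
    refine stmt8_aux p hp f f' hsupp' hf' hfund μ hμ n x hx y hy hxy ?_
    rwa [abs_sub_comm, abs_of_nonneg (by linarith)] at hdist
  · refine stmt8_aux p hp f f' hsupp' hf' hfund μ hμ n y hy x hx hxy ?_
    rwa [abs_of_nonneg (by linarith)] at hdist
end

section
/- Let f: [0,1] → ℝ be (m−1)-times continuously differentiable, and let x₁ < x₂ < ⋯ < x_{2^{m−1}} be points in [0,1] with pairwise distance at least 2^{−m} such that |f(x_i)| ≤ C for all i. Then there exists z ∈ [0,1] such that |f^{(m−1)}(z)| ≤ 2^{m²−1} C. -/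
open scoped ENNReal

open Set in
private lemma stmt11_step (f : ℝ → ℝ) {n k : ℕ} (hk : k < n)
    (hf : ContDiffOn ℝ (n : ℕ) f (Set.Icc (0:ℝ) 1))
    {N : ℕ} (δ D : ℝ) (hδ : 0 < δ) (hD : 0 ≤ D)
    (y : Fin (2*N) → ℝ) (hy : ∀ i, y i ∈ Set.Icc (0:ℝ) 1)
    (hgap : ∀ i j : Fin (2*N), (i:ℕ) < j → y i + δ ≤ y j)
    (hbd : ∀ i, |iteratedDerivWithin k f (Set.Icc (0:ℝ) 1) (y i)| ≤ D) :
    ∃ z : Fin N → ℝ, (∀ i, z i ∈ Set.Icc (0:ℝ) 1) ∧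
      (∀ i j : Fin N, (i:ℕ) < j → z i + δ ≤ z j) ∧
      ∀ i, |iteratedDerivWithin (k+1) f (Set.Icc (0:ℝ) 1) (z i)| ≤ 2*D/δ := by
  set g := iteratedDerivWithin k f (Set.Icc (0:ℝ) 1) with hg
  have hud : UniqueDiffOn ℝ (Set.Icc (0:ℝ) 1) := uniqueDiffOn_Icc one_pos
  have hcont : ContinuousOn g (Set.Icc (0:ℝ) 1) :=
    hf.continuousOn_iteratedDerivWithin (by exact_mod_cast hk.le) hud
  have hdiff : DifferentiableOn ℝ g (Set.Icc (0:ℝ) 1) :=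
    hf.differentiableOn_iteratedDerivWithin (by exact_mod_cast hk) hud
  have e : Fin N → Fin (2*N) := fun i => ⟨2*i, by omega⟩
  set e : Fin N → Fin (2*N) := fun i => ⟨2*i, by omega⟩ with he
  set o : Fin N → Fin (2*N) := fun i => ⟨2*i+1, by omega⟩ with ho
  have hab : ∀ i, y (e i) < y (o i) := fun i => by
    have := hgap (e i) (o i) (by simp [he, ho]); linarith
  have mvt : ∀ i : Fin N, ∃ c ∈ Set.Ioo (y (e i)) (y (o i)),
      deriv g c = (g (y (o i)) - g (y (e i))) / (y (o i) - y (e i)) := by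
    intro i
    have hsub : Set.Icc (y (e i)) (y (o i)) ⊆ Set.Icc (0:ℝ) 1 :=
      Set.Icc_subset_Icc (hy (e i)).1 (hy (o i)).2
    refine exists_deriv_eq_slope g (hab i) (hcont.mono hsub) ?_
    intro t ht
    have ht' : t ∈ Set.Icc (0:ℝ) 1 := hsub (Set.Ioo_subset_Icc_self ht)
    have hnh : Set.Icc (0:ℝ) 1 ∈ nhds t := by
      refine Icc_mem_nhds ?_ ?_
      · exact lt_of_le_of_lt (hy (e i)).1 ht.1
      · exact lt_of_lt_of_le ht.2 (hy (o i)).2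
    exact ((hdiff t ht').differentiableAt hnh).differentiableWithinAt
  choose c hc hderiv using mvt
  have hcmem : ∀ i, c i ∈ Set.Icc (0:ℝ) 1 := fun i =>
    ⟨(hy (e i)).1.trans (hc i).1.le, (hc i).2.le.trans (hy (o i)).2⟩
  refine ⟨c, hcmem, ?_, ?_⟩
  · intro i j hij
    have h1 : y (o i) + δ ≤ y (e j) := hgap (o i) (e j) (by simp [he, ho]; omega)
    have := (hc i).2
    have := (hc j).1
    linarith
  · intro i
    have hnh : Set.Icc (0:ℝ) 1 ∈ nhds (c i) := by
      refine Icc_mem_nhds ?_ ?_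
      · exact lt_of_le_of_lt (hy (e i)).1 (hc i).1
      · exact lt_of_lt_of_le (hc i).2 (hy (o i)).2
    rw [iteratedDerivWithin_succ, ← hg,
      derivWithin_of_mem_nhds hnh, hderiv i]
    have hpos : 0 < y (o i) - y (e i) := by linarith [hab i]
    have hδle : δ ≤ y (o i) - y (e i) := by
      have := hgap (e i) (o i) (by simp [he, ho]); linarith
    rw [abs_div, abs_of_pos hpos]
    have hnum : |g (y (o i)) - g (y (e i))| ≤ 2*D := by
      have := hbd (o i); have := hbd (e i)
      calc |g (y (o i)) - g (y (e i))| ≤ |g (y (o i))| + |g (y (e i))| := abs_sub _ _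
        _ ≤ 2*D := by linarith
    exact div_le_div₀ (by linarith) hnum hδ hδle

/-- Iterated mean value theorem: if an (m-1)-times continuously differentiable f
is bounded by C at 2^{m-1} points of pairwise distance at least 2^{-m} in [0,1],
then |f^{(m-1)}(z)| ≤ 2^{m²-1}·C at some z ∈ [0,1]. -/
theorem stmt11 (m : ℕ) (hm : 1 ≤ m) (f : ℝ → ℝ)
    (hf : ContDiffOn ℝ (m - 1 : ℕ) f (Set.Icc (0:ℝ) 1))
    (C : ℝ) (x : Fin (2 ^ (m - 1)) → ℝ)
    (hx : ∀ i, x i ∈ Set.Icc (0:ℝ) 1)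
    (hsep : ∀ i j, i ≠ j → (2:ℝ) ^ (-(m : ℤ)) ≤ |x i - x j|)
    (hbd : ∀ i, |f (x i)| ≤ C) :
    ∃ z ∈ Set.Icc (0:ℝ) 1,
      |iteratedDerivWithin (m - 1) f (Set.Icc (0:ℝ) 1) z| ≤ 2 ^ (m ^ 2 - 1) * C := by
  set δ : ℝ := (2:ℝ) ^ (-(m : ℤ)) with hδdef
  have hδ : 0 < δ := by positivity
  have hC : 0 ≤ C := (abs_nonneg _).trans (hbd ⟨0, Nat.pow_pos (by norm_num)⟩)
  have main : ∀ k, k ≤ m - 1 → ∃ y : Fin (2^(m-1-k)) → ℝ,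
      (∀ i, y i ∈ Set.Icc (0:ℝ) 1) ∧
      (∀ i j : Fin (2^(m-1-k)), (i:ℕ) < j → y i + δ ≤ y j) ∧
      (∀ i, |iteratedDerivWithin k f (Set.Icc (0:ℝ) 1) (y i)| ≤ 2^(k*(m+1)) * C) := by
    intro k
    induction k with
    | zero =>
      intro _
      set σ := Tuple.sort x with hσ
      refine ⟨fun i => x (σ i), fun i => hx _, ?_, ?_⟩
      · intro i j hij
        have hmono : x (σ i) ≤ x (σ j) := Tuple.monotone_sort x (le_of_lt (by exact_mod_cast hij))
        have hne : σ i ≠ σ j := fun h => by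
          have : i = j := σ.injective h
          omega
        have := hsep (σ i) (σ j) hne
        rw [abs_sub_comm, abs_of_nonneg (by linarith)] at this
        linarith
      · intro i
        simpa [iteratedDerivWithin_zero] using hbd (σ i)
    | succ k ih =>
      intro hk1
      obtain ⟨y, hy, hgap, hbd'⟩ := ih (by omega)
      have hNN : 2^(m-1-k) = 2 * 2^(m-1-(k+1)) := by
        have : m - 1 - k = (m - 1 - (k+1)) + 1 := by omega
        rw [this, pow_succ]; ring
      set y' : Fin (2 * 2^(m-1-(k+1))) → ℝ := fun i => y ⟨i, by omega⟩ with hy'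
      obtain ⟨z, hz1, hz2, hz3⟩ := stmt11_step f (show k < m - 1 by omega) hf δ
        (2^(k*(m+1)) * C) hδ (by positivity) y' (fun i => hy _)
        (fun i j hij => hgap _ _ (by simpa using hij)) (fun i => hbd' _)
      refine ⟨z, hz1, hz2, fun i => (hz3 i).trans (le_of_eq ?_)⟩
      rw [hδdef, zpow_neg, zpow_natCast, div_eq_mul_inv, inv_inv,
        show (k+1)*(m+1) = k*(m+1) + m + 1 by ring, pow_add, pow_add, pow_one]
      ring
  obtain ⟨y, hy, _, hbd'⟩ := main (m-1) le_rfl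
  have h0 : (0:ℕ) < 2^(m-1-(m-1)) := by positivity
  refine ⟨y ⟨0, h0⟩, hy _, (hbd' _).trans (le_of_eq ?_)⟩
  have key : (m - 1) * (m+1) = m^2 - 1 := by
    obtain ⟨m', rfl⟩ : ∃ m', m = m' + 1 := ⟨m - 1, by omega⟩
    simp only [Nat.add_sub_cancel]
    symm
    apply Nat.sub_eq_of_eq_add
    ring
  rw [key]
end

section
/- Let Ω ⊆ ℝ^d be measurable with λ(Ω) < ∞, let f ∈ C(Ω) be bounded with modulus of continuity μ (i.e., |x−y|_∞ ≤ 2^{−μ(n)} implies |f(x)−f(y)| < 2^{−n} for x,y ∈ Ω), and let ν: ℕ → ℕ satisfy: |h|_∞ ≤ 2^{−ν(m)} implies λ(Ω Δ (Ω + h))^{1/p} < 2^{−m}. Then η(n) := max{ μ(n + ⌈log₂ λ(Ω)⌉ + 1), ν(n + ⌈log₂ ‖f‖_∞⌉ + 1) } is an L^p-modulus of f: for |h|_∞ ≤ 2^{−η(n)}, ‖f̃ − τ_h f̃‖_p < 2^{−n}. -/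
open MeasureTheory
open scoped ENNReal symmDiff

private lemma le_two_pow_ceil_logb (L : ℝ) (_hL : 0 ≤ L) :
    L ≤ 2 ^ (⌈Real.logb 2 L⌉.toNat) := by
  by_cases h1 : L ≤ 1
  · exact h1.trans (one_le_pow₀ one_le_two)
  · push_neg at h1
    have hL0 : 0 < L := lt_trans one_pos h1
    have h2 : Real.logb 2 L ≤ (⌈Real.logb 2 L⌉.toNat : ℝ) := by
      have ha := Int.le_ceil (Real.logb 2 L)
      have h3 : ((⌈Real.logb 2 L⌉ : ℤ) : ℝ) ≤ (⌈Real.logb 2 L⌉.toNat : ℝ) := by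
        exact_mod_cast Int.self_le_toNat _
      linarith
    calc L = 2 ^ Real.logb 2 L := (Real.rpow_logb two_pos (by norm_num) hL0).symm
      _ ≤ 2 ^ ((⌈Real.logb 2 L⌉.toNat : ℝ)) := Real.rpow_le_rpow_of_exponent_le one_le_two h2
      _ = 2 ^ ⌈Real.logb 2 L⌉.toNat := Real.rpow_natCast 2 _

private lemma two_zpow_anti {a b : ℕ} (h : a ≤ b) : (2:ℝ) ^ (-(b:ℤ)) ≤ 2 ^ (-(a:ℤ)) :=
  zpow_le_zpow_right₀ one_le_two (by omega)

private lemma two_zpow_pos (a : ℤ) : (0:ℝ) < 2 ^ a := zpow_pos two_pos a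

/-- From a modulus of continuity of f on Ω, a bound B on |f|, and an L^p-modulus ν
of the characteristic function of Ω, one obtains an L^p-modulus of the extension
of f by zero: η(n) = max{μ(n + ⌈log₂ λ(Ω)⌉ + 1), ν(n + ⌈log₂ B⌉ + 1)}. -/
theorem stmt12 (d : ℕ) (Ω : Set (Fin d → ℝ)) (hΩm : MeasurableSet Ω)
    (hΩfin : volume Ω < ⊤)
    (p : ℝ) (hp : 1 ≤ p) (f : (Fin d → ℝ) → ℝ) (hcont : ContinuousOn f Ω)
    (B : ℝ) (hB : ∀ x ∈ Ω, |f x| ≤ B)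
    (μ ν : ℕ → ℕ)
    (hμ : ∀ n : ℕ, ∀ x ∈ Ω, ∀ y ∈ Ω,
      ‖x - y‖ ≤ (2:ℝ) ^ (-(μ n : ℤ)) → |f x - f y| < (2:ℝ) ^ (-(n : ℤ)))
    (hν : ∀ m : ℕ, ∀ h : Fin d → ℝ, ‖h‖ ≤ (2:ℝ) ^ (-(ν m : ℤ)) →
      (volume (Ω ∆ ((fun x => x + h) '' Ω))) ^ (1 / p) <
        ENNReal.ofReal ((2:ℝ) ^ (-(m : ℤ)))) :
    ∀ n : ℕ, ∀ h : Fin d → ℝ,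
      ‖h‖ ≤ (2:ℝ) ^ (-(max (μ (n + ⌈Real.logb 2 (volume Ω).toReal⌉.toNat + 1))
                          (ν (n + ⌈Real.logb 2 B⌉.toNat + 1)) : ℤ)) →
      eLpNorm (fun x => Ω.indicator f x - Ω.indicator f (x + h))
          (ENNReal.ofReal p) volume < ENNReal.ofReal ((2:ℝ) ^ (-(n : ℤ))) := by
  intro n h hh
  have hp0 : 0 < p := lt_of_lt_of_le one_pos hp
  set q : ℝ≥0∞ := ENNReal.ofReal p with hq
  have hq0 : q ≠ 0 := by
    simp only [hq, ne_eq, ENNReal.ofReal_eq_zero, not_le]; linarith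
  have hqtop : q ≠ ⊤ := ENNReal.ofReal_ne_top
  have hqtoReal : q.toReal = p := ENNReal.toReal_ofReal hp0.le
  -- trivial case : B ≤ 0 forces the indicator function to vanish
  by_cases hBpos : B ≤ 0
  · have hf0 : Ω.indicator f = fun _ => (0:ℝ) := by
      funext x
      by_cases hx : x ∈ Ω
      · have h1 := hB x hx
        have h2 : |f x| = 0 := le_antisymm (h1.trans hBpos) (abs_nonneg _)
        simp [Set.indicator_of_mem hx, abs_eq_zero.mp h2]
      · simp [Set.indicator_of_notMem hx]
    have : (fun x => Ω.indicator f x - Ω.indicator f (x + h)) = fun _ => (0:ℝ) := by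
      funext x; rw [hf0]; simp
    rw [this]
    have : eLpNorm (fun _ : Fin d → ℝ => (0:ℝ)) q volume = 0 := eLpNorm_zero
    rw [this]
    exact ENNReal.ofReal_pos.mpr (two_zpow_pos _)
  push_neg at hBpos
  set k₁ := ⌈Real.logb 2 (volume Ω).toReal⌉.toNat with hk₁
  set k₂ := ⌈Real.logb 2 B⌉.toNat with hk₂
  set m₁ := n + k₁ + 1 with hm₁
  set m₂ := n + k₂ + 1 with hm₂
  set g : (Fin d → ℝ) → ℝ := fun x => Ω.indicator f x - Ω.indicator f (x + h) with hg
  set S : Set (Fin d → ℝ) := {x | x + h ∈ Ω} with hS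
  have hSm : MeasurableSet S := hΩm.preimage (measurable_add_const h)
  set A : Set (Fin d → ℝ) := Ω ∩ S with hA
  set E : Set (Fin d → ℝ) := Ω ∆ S with hE
  have hAm : MeasurableSet A := hΩm.inter hSm
  have hEm : MeasurableSet E := hΩm.symmDiff hSm
  -- measurability of g
  have hf1 : AEStronglyMeasurable (Ω.indicator f) volume :=
    (aestronglyMeasurable_indicator_iff hΩm).mpr (hcont.aestronglyMeasurable hΩm)
  have hf2 : AEStronglyMeasurable (fun x => Ω.indicator f (x + h)) volume :=
    hf1.comp_measurePreserving (measurePreserving_add_right volume h)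
  have hgm : AEStronglyMeasurable g volume := hf1.sub hf2
  -- the splitting
  have hsplit : g = A.indicator g + E.indicator g := by
    funext x
    by_cases hx : x ∈ Ω <;> by_cases hx' : x ∈ S
    · have hxA : x ∈ A := ⟨hx, hx'⟩
      have hxE : x ∉ E := by
        simp [hE, Set.mem_symmDiff, hx, hx']
      simp [Set.indicator_of_mem hxA, Set.indicator_of_notMem hxE]
    · have hxA : x ∉ A := by simp [hA, hx']
      have hxE : x ∈ E := by simp [hE, Set.mem_symmDiff, hx, hx']
      simp [Set.indicator_of_notMem hxA, Set.indicator_of_mem hxE]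
    · have hxA : x ∉ A := by simp [hA, hx]
      have hxE : x ∈ E := by simp [hE, Set.mem_symmDiff, hx, hx']
      simp [Set.indicator_of_notMem hxA, Set.indicator_of_mem hxE]
    · have hxA : x ∉ A := by simp [hA, hx]
      have hxE : x ∉ E := by simp [hE, Set.mem_symmDiff, hx, hx']
      have hgx : g x = 0 := by
        simp [hg, Set.indicator_of_notMem hx, Set.indicator_of_notMem (show x + h ∉ Ω from hx')]
      simp [Set.indicator_of_notMem hxA, Set.indicator_of_notMem hxE, hgx]
  -- norm of h is small
  have hhμ : ‖h‖ ≤ (2:ℝ) ^ (-(μ m₁ : ℤ)) :=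
    hh.trans (zpow_le_zpow_right₀ one_le_two (neg_le_neg le_sup_left))
  have hhν : ‖h‖ ≤ (2:ℝ) ^ (-(ν m₂ : ℤ)) :=
    hh.trans (zpow_le_zpow_right₀ one_le_two (neg_le_neg le_sup_right))
  set c₁ : ℝ := (2:ℝ) ^ (-(m₁ : ℤ)) with hc₁
  have hc₁pos : 0 < c₁ := two_zpow_pos _
  -- pointwise bound on A
  have hptA : ∀ x, ‖A.indicator g x‖ ≤ ‖A.indicator (fun _ => c₁) x‖ := by
    intro x
    by_cases hx : x ∈ A
    · have hx1 : x ∈ Ω := hx.1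
      have hx2' : x + h ∈ Ω := hx.2
      have hd : ‖x - (x + h)‖ ≤ (2:ℝ) ^ (-(μ m₁ : ℤ)) := by
        have : x - (x + h) = -h := by abel
        rw [this, norm_neg]; exact hhμ
      have := hμ m₁ x hx1 (x + h) hx2' hd
      have hgx : g x = f x - f (x + h) := by
        simp [hg, Set.indicator_of_mem hx1, Set.indicator_of_mem hx2']
      rw [Set.indicator_of_mem hx, Set.indicator_of_mem hx, Real.norm_eq_abs, Real.norm_eq_abs,
        hgx, abs_of_pos hc₁pos]
      exact this.le
    · simp [Set.indicator_of_notMem hx]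
  -- pointwise bound on E
  have hptE : ∀ x, ‖E.indicator g x‖ ≤ ‖E.indicator (fun _ => B) x‖ := by
    intro x
    by_cases hx : x ∈ E
    · rw [Set.indicator_of_mem hx, Set.indicator_of_mem hx, Real.norm_eq_abs, Real.norm_eq_abs,
        abs_of_pos hBpos]
      rcases Set.mem_symmDiff.mp hx with ⟨hx1, hx2⟩ | ⟨hx1, hx2⟩
      · have hgx : g x = f x := by
          simp [hg, Set.indicator_of_mem hx1, Set.indicator_of_notMem (show x + h ∉ Ω from hx2)]
        rw [hgx]; exact hB x hx1
      · have hgx : g x = -f (x + h) := by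
          simp [hg, Set.indicator_of_notMem hx2, Set.indicator_of_mem (show x + h ∈ Ω from hx1)]
        rw [hgx, abs_neg]; exact hB _ hx1
    · simp [Set.indicator_of_notMem hx]
  -- bound on volume of Ω
  have hVol : volume Ω ≤ ENNReal.ofReal ((2:ℝ) ^ k₁) := by
    have := le_two_pow_ceil_logb (volume Ω).toReal ENNReal.toReal_nonneg
    calc volume Ω = ENNReal.ofReal (volume Ω).toReal := (ENNReal.ofReal_toReal hΩfin.ne).symm
      _ ≤ ENNReal.ofReal ((2:ℝ) ^ k₁) := ENNReal.ofReal_le_ofReal this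
  have h2k₁ : (1:ℝ≥0∞) ≤ ENNReal.ofReal ((2:ℝ) ^ k₁) := by
    rw [show (1:ℝ≥0∞) = ENNReal.ofReal 1 by simp]
    exact ENNReal.ofReal_le_ofReal (one_le_pow₀ one_le_two)
  -- bound on term A
  have htermA : eLpNorm (A.indicator g) q volume ≤ ENNReal.ofReal ((2:ℝ) ^ (-(n+1 : ℤ))) := by
    calc eLpNorm (A.indicator g) q volume
        ≤ eLpNorm (A.indicator (fun _ => c₁)) q volume := eLpNorm_mono hptA
      _ = ‖c₁‖₊ * volume A ^ (1 / q.toReal) := eLpNorm_indicator_const hAm hq0 hqtop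
      _ ≤ ENNReal.ofReal c₁ * ENNReal.ofReal ((2:ℝ) ^ k₁) := by
          apply mul_le_mul'
          · rw [← enorm_eq_nnnorm, ← ofReal_norm, Real.norm_eq_abs, abs_of_pos hc₁pos]
          · have hμA : volume A ≤ ENNReal.ofReal ((2:ℝ) ^ k₁) :=
              le_trans (measure_mono Set.inter_subset_left) hVol
            calc volume A ^ (1 / q.toReal)
                ≤ (ENNReal.ofReal ((2:ℝ) ^ k₁)) ^ (1 / q.toReal) :=
                  ENNReal.rpow_le_rpow hμA (by positivity)
              _ ≤ (ENNReal.ofReal ((2:ℝ) ^ k₁)) ^ (1:ℝ) := by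
                  apply ENNReal.rpow_le_rpow_of_exponent_le h2k₁
                  rw [hqtoReal]
                  rw [div_le_one hp0]; linarith
              _ = ENNReal.ofReal ((2:ℝ) ^ k₁) := ENNReal.rpow_one _
      _ = ENNReal.ofReal (c₁ * (2:ℝ) ^ k₁) := (ENNReal.ofReal_mul hc₁pos.le).symm
      _ = ENNReal.ofReal ((2:ℝ) ^ (-(n+1 : ℤ))) := by
          congr 1
          rw [hc₁, ← zpow_natCast (2:ℝ) k₁, ← zpow_add₀ (two_ne_zero)]
          congr 1
          simp only [hm₁]
          push_cast
          ring
  -- bound on B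
  have hBle : B ≤ (2:ℝ) ^ k₂ := le_two_pow_ceil_logb B hBpos.le
  -- the symmetric difference identity
  have hIm : ((fun x => x + (-h)) '' Ω) = S := by
    ext x
    simp only [Set.mem_image, hS, Set.mem_setOf_eq]
    constructor
    · rintro ⟨y, hy, rfl⟩
      simpa [neg_add_cancel_right] using hy
    · intro hx
      exact ⟨x + h, hx, by abel⟩
  -- bound on term E
  have htermE : eLpNorm (E.indicator g) q volume < ENNReal.ofReal ((2:ℝ) ^ (-(n+1 : ℤ))) := by
    have hνE : (volume E) ^ (1 / p) < ENNReal.ofReal ((2:ℝ) ^ (-(m₂ : ℤ))) := by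
      have := hν m₂ (-h) (by rwa [norm_neg])
      rwa [hIm] at this
    calc eLpNorm (E.indicator g) q volume
        ≤ eLpNorm (E.indicator (fun _ => B)) q volume := eLpNorm_mono hptE
      _ = ‖B‖₊ * volume E ^ (1 / q.toReal) := eLpNorm_indicator_const hEm hq0 hqtop
      _ = ENNReal.ofReal B * volume E ^ (1 / p) := by
          rw [← enorm_eq_nnnorm, ← ofReal_norm, Real.norm_eq_abs, abs_of_pos hBpos, hqtoReal]
      _ < ENNReal.ofReal B * ENNReal.ofReal ((2:ℝ) ^ (-(m₂ : ℤ))) := by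
          rw [ENNReal.mul_lt_mul_iff_right (by simp [ENNReal.ofReal_eq_zero]; linarith)
            ENNReal.ofReal_ne_top]
          exact hνE
      _ ≤ ENNReal.ofReal ((2:ℝ) ^ k₂) * ENNReal.ofReal ((2:ℝ) ^ (-(m₂ : ℤ))) := by
          exact mul_le_mul' (ENNReal.ofReal_le_ofReal hBle) le_rfl
      _ = ENNReal.ofReal ((2:ℝ) ^ k₂ * (2:ℝ) ^ (-(m₂ : ℤ))) :=
          (ENNReal.ofReal_mul (by positivity)).symm
      _ = ENNReal.ofReal ((2:ℝ) ^ (-(n+1 : ℤ))) := by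
          congr 1
          rw [← zpow_natCast (2:ℝ) k₂, ← zpow_add₀ (two_ne_zero)]
          congr 1
          simp only [hm₂]
          push_cast
          ring
  -- conclusion
  have hsum : eLpNorm g q volume ≤
      eLpNorm (A.indicator g) q volume + eLpNorm (E.indicator g) q volume := by
    conv_lhs => rw [hsplit]
    exact eLpNorm_add_le (hgm.indicator hAm) (hgm.indicator hEm)
      (ENNReal.one_le_ofReal.mpr hp)
  have hfin : eLpNorm (A.indicator g) q volume ≠ ⊤ :=
    ne_top_of_le_ne_top ENNReal.ofReal_ne_top htermA
  calc eLpNorm g q volume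
      ≤ eLpNorm (A.indicator g) q volume + eLpNorm (E.indicator g) q volume := hsum
    _ < ENNReal.ofReal ((2:ℝ) ^ (-(n+1 : ℤ))) + ENNReal.ofReal ((2:ℝ) ^ (-(n+1 : ℤ))) :=
        ENNReal.add_lt_add_of_le_of_lt hfin htermA htermE
    _ = ENNReal.ofReal ((2:ℝ) ^ (-(n+1 : ℤ)) + (2:ℝ) ^ (-(n+1 : ℤ))) :=
        (ENNReal.ofReal_add (by positivity) (by positivity)).symm
    _ = ENNReal.ofReal ((2:ℝ) ^ (-(n : ℤ))) := by
        congr 1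
        rw [← two_mul, show (-(n:ℤ)) = 1 + (-(n+1:ℤ)) by ring, zpow_add₀ (two_ne_zero)]
        norm_num
end

section
/- For l: ℕ → ℕ strictly increasing when nonzero and C ∈ ℕ, let K^∞_{l,C} ⊆ C([0,1]) be the set of continuous functions f with ‖f‖_∞ ≤ 2^C and with l as modulus of continuity (|x−y| ≤ 2^{−l(n)} implies |f(x)−f(y)| < 2^{−n}). Then for every n, K^∞_{l,C} can be covered by at most 2^{2^{l(n)+1} + n + C + 2} balls of radius 2^{−n} in the supremum norm. -/
open Finset

namespace AA15

noncomputable def clampU (u : ℝ) : ℝ := max 0 (min 1 u)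

lemma clampU_of_nonpos {u : ℝ} (h : u ≤ 0) : clampU u = 0 := by
  unfold clampU
  rw [max_eq_left]
  exact le_trans (min_le_right _ _) h

lemma clampU_of_one_le {u : ℝ} (h : 1 ≤ u) : clampU u = 1 := by
  unfold clampU
  rw [min_eq_left h, max_eq_right zero_le_one]

lemma clampU_of_mem {u : ℝ} (h0 : 0 ≤ u) (h1 : u ≤ 1) : clampU u = u := by
  unfold clampU
  rw [min_eq_right h1, max_eq_right h0]

noncomputable def cseq (σ : ℝ) (Nm1 : ℕ) (k : ℤ) (d : ℕ → ℕ) (i : ℕ) : ℝ :=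
  σ * k + ∑ j ∈ Finset.range (min i Nm1), (2 * (d j : ℝ) - 3) * (σ / 2)

lemma cseq_zero (σ : ℝ) (Nm1 : ℕ) (k : ℤ) (d : ℕ → ℕ) : cseq σ Nm1 k d 0 = σ * k := by
  simp [cseq]

lemma cseq_succ (σ : ℝ) (Nm1 : ℕ) (k : ℤ) (d : ℕ → ℕ) (i : ℕ) (h : i < Nm1) :
    cseq σ Nm1 k d (i+1) = cseq σ Nm1 k d i + (2 * (d i : ℝ) - 3) * (σ / 2) := by
  unfold cseq
  rw [min_eq_left (by omega : i + 1 ≤ Nm1), min_eq_left (by omega : i ≤ Nm1),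
    Finset.sum_range_succ]
  ring

lemma cseq_stable (σ : ℝ) (Nm1 : ℕ) (k : ℤ) (d : ℕ → ℕ) (i : ℕ) (h : Nm1 ≤ i) :
    cseq σ Nm1 k d i = cseq σ Nm1 k d Nm1 := by
  unfold cseq
  rw [min_eq_right h, min_self]

noncomputable def vseq (σ : ℝ) (Nm1 R : ℕ) (k : ℤ) (d : ℕ → ℕ) (j : ℕ) : ℝ :=
  if R ∣ j ∧ j ≠ 0 then (cseq σ Nm1 k d (j / R - 1) + cseq σ Nm1 k d (j / R)) / 2
  else cseq σ Nm1 k d (j / R)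

noncomputable def pl (V : ℕ → ℝ) (M : ℕ) : C(Set.Icc (0:ℝ) 1, ℝ) :=
  ⟨fun x => V 0 + ∑ j ∈ Finset.range M, (V (j+1) - V j) * clampU ((M:ℝ) * (x:ℝ) - j), by
    apply Continuous.add continuous_const
    apply continuous_finset_sum
    intro j _
    apply Continuous.mul continuous_const
    exact continuous_const.max (continuous_const.min
      ((continuous_const.mul continuous_subtype_val).sub continuous_const))⟩

lemma pl_apply_seg (V : ℕ → ℝ) (M : ℕ) (x : Set.Icc (0:ℝ) 1) (j : ℕ)
    (hj : j < M) (h1 : (j:ℝ) ≤ (M:ℝ) * (x:ℝ)) (h2 : (M:ℝ) * (x:ℝ) ≤ (j:ℝ) + 1) :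
    pl V M x = V j + ((M:ℝ) * (x:ℝ) - j) * (V (j+1) - V j) := by
  have hterm : ∀ j' ∈ Finset.range M,
      (V (j'+1) - V j') * clampU ((M:ℝ) * (x:ℝ) - j') =
      (if j' < j then V (j'+1) - V j' else
        if j' = j then ((M:ℝ) * (x:ℝ) - j) * (V (j+1) - V j) else 0) := by
    intro j' _
    rcases lt_trichotomy j' j with h | h | h
    · rw [if_pos h, clampU_of_one_le, mul_one]
      have : (j':ℝ) + 1 ≤ (j:ℝ) := by exact_mod_cast h
      linarith
    · subst h
      rw [if_neg (lt_irrefl _), if_pos rfl, clampU_of_mem (by linarith) (by linarith)]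
      ring
    · rw [if_neg (by omega), if_neg (by omega), clampU_of_nonpos, mul_zero]
      have : (j:ℝ) + 1 ≤ (j':ℝ) := by exact_mod_cast h
      linarith
  show V 0 + _ = _
  rw [Finset.sum_congr rfl hterm]
  rw [← Finset.sum_subset (Finset.range_subset_range.2 (by omega : j + 1 ≤ M))
    (fun x hx hnx => by
        simp only [Finset.mem_range] at hx hnx
        rw [if_neg (by omega), if_neg (by omega)])]
  rw [Finset.sum_range_succ, if_neg (lt_irrefl _), if_pos rfl]
  have : ∑ j' ∈ Finset.range j, (if j' < j then V (j'+1) - V j' else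
      if j' = j then ((M:ℝ) * (x:ℝ) - j) * (V (j+1) - V j) else 0)
      = ∑ j' ∈ Finset.range j, (V (j'+1) - V j') := by
    apply Finset.sum_congr rfl
    intro j' hj'
    rw [if_pos (Finset.mem_range.1 hj')]
  rw [this, Finset.sum_range_sub (fun i => V i)]
  ring

lemma lmono (l : ℕ → ℕ) (hl : ∀ n, l n ≠ 0 → l n < l (n + 1)) (n : ℕ) (h : l n ≠ 0) :
    ∀ j, l n + j ≤ l (n + j) := by
  intro j
  induction j with
  | zero => simp
  | succ j ih =>
    have h2 : l (n + j) ≠ 0 := by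
      have := Nat.pos_of_ne_zero h; omega
    have h3 := hl (n + j) h2
    have e : n + (j + 1) = n + j + 1 := by omega
    rw [e]
    omega

lemma latt (σ a b φ : ℝ) (hσ : 0 < σ) (h : a + σ < b) :
    ∃ k : ℤ, a < σ * k + φ ∧ σ * k + φ < b := by
  refine ⟨⌊(a - φ) / σ⌋ + 1, ?_, ?_⟩
  · have h1 : (a - φ) / σ < (⌊(a - φ) / σ⌋ : ℝ) + 1 := Int.lt_floor_add_one _
    have h2 : a - φ < ((⌊(a - φ) / σ⌋ : ℝ) + 1) * σ := (div_lt_iff₀ hσ).1 h1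
    push_cast
    nlinarith
  · have h1 : (⌊(a - φ) / σ⌋ : ℝ) ≤ (a - φ) / σ := Int.floor_le _
    have h2 : (⌊(a - φ) / σ⌋ : ℝ) * σ ≤ a - φ := by
      rw [← le_div_iff₀ hσ]; exact h1
    push_cast
    nlinarith

lemma pl_close (V : ℕ → ℝ) (M : ℕ) (ρ δ : ℝ) (f : C(Set.Icc (0:ℝ) 1, ℝ))
    (hρ : 0 < ρ) (hδ : 0 < δ) (hMρ : (M:ℝ) * ρ = 1) (hM : 0 < M)
    (hV : ∀ j ≤ M, ∀ x : Set.Icc (0:ℝ) 1, |(x:ℝ) - (j:ℝ) * ρ| ≤ ρ → |f x - V j| < δ) :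
    dist f (pl V M) < δ := by
  rw [ContinuousMap.dist_lt_iff hδ]
  intro x
  rw [Real.dist_eq]
  have hx0 : (0:ℝ) ≤ (x:ℝ) := x.2.1
  have hx1 : (x:ℝ) ≤ 1 := x.2.2
  have hM0 : (0:ℝ) < (M:ℝ) := by exact_mod_cast hM
  set u : ℝ := (M:ℝ) * (x:ℝ) with hu
  have hu0 : 0 ≤ u := by positivity
  have huM : u ≤ (M:ℝ) := by nlinarith
  set j : ℕ := min (Nat.floor u) (M - 1) with hjdef
  have hjM : j < M := by
    have : j ≤ M - 1 := min_le_right _ _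
    omega
  have h1 : (j:ℝ) ≤ u := by
    rcases le_or_gt (Nat.floor u) (M - 1) with h | h
    · have hj' : j = Nat.floor u := min_eq_left h
      rw [hj']; exact Nat.floor_le hu0
    · have hj' : j = M - 1 := min_eq_right h.le
      rw [hj']
      calc ((M - 1 : ℕ) : ℝ) ≤ (Nat.floor u : ℝ) := by exact_mod_cast h.le
        _ ≤ u := Nat.floor_le hu0
  have h2 : u ≤ (j:ℝ) + 1 := by
    rcases le_or_gt (Nat.floor u) (M - 1) with h | h
    · have hj' : j = Nat.floor u := min_eq_left h
      rw [hj']; exact (Nat.lt_floor_add_one u).le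
    · have hj' : j = M - 1 := min_eq_right h.le
      rw [hj']
      have e : ((M - 1 : ℕ) : ℝ) + 1 = (M:ℝ) := by
        have h1M : (1:ℕ) ≤ M := hM
        push_cast [Nat.cast_sub h1M]
        ring
      rw [e]; exact huM
  have hxu : u * ρ = (x:ℝ) := by
    rw [hu, mul_comm (M:ℝ) ((x:ℝ)), mul_assoc, hMρ, mul_one]
  have hxj : |(x:ℝ) - (j:ℝ) * ρ| ≤ ρ := by
    rw [← hxu, ← sub_mul, abs_mul, abs_of_nonneg hρ.le,
      abs_of_nonneg (by linarith : (0:ℝ) ≤ u - j)]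
    nlinarith
  have hxj1 : |(x:ℝ) - ((j:ℝ)+1) * ρ| ≤ ρ := by
    rw [← hxu, ← sub_mul, abs_mul, abs_of_nonneg hρ.le, abs_sub_comm u ((j:ℝ)+1),
      abs_of_nonneg (by linarith : (0:ℝ) ≤ (j:ℝ) + 1 - u)]
    nlinarith
  have hA := hV j hjM.le x hxj
  have hB := hV (j+1) (by omega) x (by push_cast; exact hxj1)
  rw [pl_apply_seg V M x j hjM h1 h2]
  set t : ℝ := u - j with ht
  have ht0 : 0 ≤ t := by linarith
  have ht1 : t ≤ 1 := by linarith
  have h3 : f x - (V j + t * (V (j+1) - V j))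
      = (1 - t) * (f x - V j) + t * (f x - V (j+1)) := by ring
  rw [h3]
  have hstep : |(1 - t) * (f x - V j) + t * (f x - V (j+1))|
      ≤ (1 - t) * |f x - V j| + t * |f x - V (j+1)| := by
    refine (abs_add_le _ _).trans ?_
    rw [abs_mul, abs_mul, abs_of_nonneg (by linarith), abs_of_nonneg ht0]
  rcases lt_or_ge t 1 with hc | hc
  · have e1 : (1 - t) * |f x - V j| < (1 - t) * δ :=
      mul_lt_mul_of_pos_left hA (by linarith)
    have e2 : t * |f x - V (j+1)| ≤ t * δ :=
      mul_le_mul_of_nonneg_left hB.le ht0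
    calc |(1 - t) * (f x - V j) + t * (f x - V (j+1))|
        ≤ (1 - t) * |f x - V j| + t * |f x - V (j+1)| := hstep
      _ < δ := by linarith
  · have htt : t = 1 := le_antisymm ht1 hc
    calc |(1 - t) * (f x - V j) + t * (f x - V (j+1))|
        ≤ (1 - t) * |f x - V j| + t * |f x - V (j+1)| := hstep
      _ < δ := by rw [htt]; simpa using hB

end AA15

set_option maxHeartbeats 1600000 in
/-- Upper bound in the quantitative Arzelà–Ascoli theorem: the set K^∞_{l,C} of
continuous functions on [0,1] bounded by 2^C with modulus of continuity l can be
covered by at most 2^{2^{l(n)+1} + n + C + 2} balls of radius 2^{-n}. -/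
theorem stmt15 (l : ℕ → ℕ) (hl : ∀ n, l n ≠ 0 → l n < l (n + 1)) (C : ℕ)
    (K : Set C(Set.Icc (0:ℝ) 1, ℝ))
    (hK : K = {f : C(Set.Icc (0:ℝ) 1, ℝ) | (∀ x, |f x| ≤ 2 ^ C) ∧
      ∀ k : ℕ, ∀ x y : Set.Icc (0:ℝ) 1,
        |(x : ℝ) - (y : ℝ)| ≤ (2:ℝ) ^ (-(l k : ℤ)) → |f x - f y| < (2:ℝ) ^ (-(k : ℤ))}) :
    ∀ n : ℕ, ∃ t : Finset C(Set.Icc (0:ℝ) 1, ℝ),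
      t.card ≤ 2 ^ (2 ^ (l n + 1) + n + C + 2) ∧
      K ⊆ ⋃ g ∈ t, Metric.ball g ((2:ℝ) ^ (-(n : ℤ))) := by
  classical
  subst hK
  intro n
  set ε : ℝ := (2:ℝ) ^ (-(n:ℤ) - 5) with hεdef
  have hεpos : 0 < ε := by positivity
  have hδε : (2:ℝ) ^ (-(n:ℤ)) = 32 * ε := by
    rw [hεdef, show (-(n:ℤ)) = (-(n:ℤ) - 5) + 5 by ring, zpow_add₀ (two_ne_zero)]
    norm_num
    ring
  set w : ℝ := (2:ℝ) ^ (-(l n : ℤ)) with hwdef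
  have hwpos : 0 < w := by positivity
  set N : ℕ := 2 ^ (l n) with hNdef
  have hN1 : 1 ≤ N := Nat.one_le_two_pow
  set m : ℕ := l (n + 4) with hmdef
  have hlnm : l n ≤ m := by
    by_cases h0 : l n = 0
    · omega
    · have := AA15.lmono l hl n h0 4
      omega
  set ρ : ℝ := (2:ℝ) ^ (-(m : ℤ)) with hρdef
  have hρpos : 0 < ρ := by positivity
  set R : ℕ := 2 ^ (m - l n) with hRdef
  set M : ℕ := 2 ^ m with hMdef
  have hRpos : 0 < R := by rw [hRdef]; positivity
  have hMpos : 0 < M := by rw [hMdef]; positivity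
  have hMRN : M = N * R := by
    rw [hMdef, hNdef, hRdef, ← pow_add]
    congr 1
    omega
  have hRρ : (R:ℝ) * ρ = w := by
    rw [hRdef, hρdef, hwdef]
    push_cast
    rw [← zpow_natCast (2:ℝ) (m - l n), ← zpow_add₀ (two_ne_zero)]
    congr 1
    push_cast [Nat.cast_sub hlnm]
    ring
  have hMρ : (M:ℝ) * ρ = 1 := by
    rw [hMdef, hρdef]
    push_cast
    rw [← zpow_natCast (2:ℝ) m, ← zpow_add₀ (two_ne_zero)]
    simp
  have hNw : (N:ℝ) * w = 1 := by
    rw [hNdef, hwdef]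
    push_cast
    rw [← zpow_natCast (2:ℝ) (l n), ← zpow_add₀ (two_ne_zero)]
    simp
  set K0 : ℤ := 2 ^ (n + C + 1) + 2 with hK0def
  refine ⟨Finset.image
      (fun γ : ℤ × (Fin (N - 1) → Fin 4) =>
        AA15.pl (AA15.vseq (24 * ε) (N - 1) R γ.1
          (fun j => if h : j < N - 1 then ((γ.2 ⟨j, h⟩ : ℕ)) else 0)) M)
      (Finset.Icc (-K0) K0 ×ˢ Finset.univ), ?_, ?_⟩
  · -- cardinality bound
    have hcard1 : (Finset.Icc (-K0) K0).card = 2 ^ (n + C + 2) + 5 := by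
      rw [Int.card_Icc]
      have e : K0 + 1 - -K0 = ((2 ^ (n + C + 2) + 5 : ℕ) : ℤ) := by
        rw [hK0def]
        push_cast
        have e2 : (2:ℤ)^(n+C+2) = 2^(n+C+1) * 2 := by rw [pow_succ]
        linarith
      rw [e, Int.toNat_natCast]
    calc (Finset.image _ _).card
        ≤ (Finset.Icc (-K0) K0 ×ˢ (Finset.univ : Finset (Fin (N-1) → Fin 4))).card :=
          Finset.card_image_le
      _ = (Finset.Icc (-K0) K0).card * (Finset.univ : Finset (Fin (N-1) → Fin 4)).card :=
          Finset.card_product _ _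
      _ = (2 ^ (n + C + 2) + 5) * 4 ^ (N - 1) := by
          rw [hcard1, Finset.card_univ, Fintype.card_fun]
          simp
      _ ≤ 2 ^ (n + C + 4) * 4 ^ (N - 1) := by
          apply Nat.mul_le_mul_right
          have h4 : (4:ℕ) ≤ 2 ^ (n + C + 2) := by
            calc (4:ℕ) = 2 ^ 2 := rfl
              _ ≤ 2 ^ (n + C + 2) := Nat.pow_le_pow_right (by norm_num) (by omega)
          have e3 : 2 ^ (n + C + 4) = 4 * 2 ^ (n + C + 2) := by
            rw [show n+C+4 = 2 + (n+C+2) by omega, pow_add]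
            norm_num
          omega
      _ = 2 ^ (2 ^ (l n + 1) + n + C + 2) := by
          rw [show (4:ℕ) = 2^2 by norm_num, ← pow_mul, ← pow_add]
          congr 1
          have e4 : 2 ^ (l n + 1) = 2 * N := by rw [hNdef, pow_succ]; ring
          omega
  · -- covering
    intro f hf
    obtain ⟨hfb, hfm⟩ := hf

    -- moduli facts
    have H1 : ∀ x y : Set.Icc (0:ℝ) 1, |(x:ℝ) - (y:ℝ)| ≤ w → |f x - f y| < 32 * ε := by
      intro x y h
      rw [hwdef] at h
      have := hfm n x y h
      rwa [hδε] at this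
    have hb5 : (2:ℝ) ^ (-((n+4:ℕ):ℤ)) = 2 * ε := by
      rw [hεdef, show (-((n+4:ℕ):ℤ)) = (-(n:ℤ) - 5) + 1 by push_cast; ring,
        zpow_add₀ (two_ne_zero)]
      norm_num
      ring
    have hb3 : (2:ℝ) ^ (-((n+3:ℕ):ℤ)) = 4 * ε := by
      rw [hεdef, show (-((n+3:ℕ):ℤ)) = (-(n:ℤ) - 5) + 2 by push_cast; ring,
        zpow_add₀ (two_ne_zero)]
      norm_num
      ring
    have H5 : ∀ x y : Set.Icc (0:ℝ) 1, |(x:ℝ) - (y:ℝ)| ≤ ρ → |f x - f y| < 2 * ε := by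
      intro x y h
      rw [hρdef, hmdef] at h
      have := hfm (n+4) x y h
      rwa [hb5] at this
    have Hch : ∀ x y : Set.Icc (0:ℝ) 1, |(x:ℝ) - (y:ℝ)| ≤ w + 2 * ρ →
        |f x - f y| ≤ 36 * ε := by
      have key : ∀ x y : Set.Icc (0:ℝ) 1, (x:ℝ) ≤ (y:ℝ) → (y:ℝ) - (x:ℝ) ≤ w + 2 * ρ →
          |f x - f y| ≤ 36 * ε := by
        intro x y hxy hd
        by_cases hc : (y:ℝ) - (x:ℝ) ≤ (2:ℝ) ^ (-(l (n+3) : ℤ))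
        · have h' : |(x:ℝ) - (y:ℝ)| ≤ (2:ℝ) ^ (-(l (n+3) : ℤ)) := by
            rw [abs_sub_comm, abs_of_nonneg (by linarith)]
            exact hc
          have := hfm (n+3) x y h'
          rw [hb3] at this
          linarith
        · push_neg at hc
          have hl3 : l (n+3) ≠ 0 := by
            intro h0
            rw [h0] at hc
            norm_num at hc
            linarith [x.2.1, y.2.2]
          have hm3 : l (n+3) < m := by rw [hmdef]; exact hl (n+3) hl3
          have h2ρ : 2 * ρ ≤ (2:ℝ) ^ (-(l (n+3) : ℤ)) := by
            rw [hρdef]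
            calc 2 * (2:ℝ) ^ (-(m:ℤ)) = (2:ℝ) ^ (1 + -(m:ℤ)) := by
                  rw [zpow_add₀ (two_ne_zero)]; norm_num
              _ ≤ (2:ℝ) ^ (-(l (n+3) : ℤ)) := by
                  apply zpow_le_zpow_right₀ (by norm_num : (1:ℝ) ≤ 2)
                  omega
          set w3 : ℝ := (2:ℝ) ^ (-(l (n+3) : ℤ)) with hw3
          have hw3pos : (0:ℝ) < w3 := by rw [hw3]; positivity
          have hzx : (x:ℝ) ≤ (y:ℝ) - w3 := by linarith
          have hz0 : (0:ℝ) ≤ (y:ℝ) - w3 := le_trans x.2.1 hzx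
          have hz1 : (y:ℝ) - w3 ≤ 1 := by linarith [y.2.2, hw3pos.le]
          have e1 : |f (⟨(y:ℝ) - w3, hz0, hz1⟩ : Set.Icc (0:ℝ) 1) - f y| < 4 * ε := by
            rw [← hb3]
            apply hfm (n+3)
            show |((y:ℝ) - w3) - (y:ℝ)| ≤ _
            rw [show ((y:ℝ) - w3) - (y:ℝ) = -w3 by ring, abs_neg,
              abs_of_nonneg hw3pos.le, hw3]
          have e2 : |f x - f (⟨(y:ℝ) - w3, hz0, hz1⟩ : Set.Icc (0:ℝ) 1)| < 32 * ε := by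
            apply H1
            show |(x:ℝ) - ((y:ℝ) - w3)| ≤ w
            rw [abs_sub_comm, abs_of_nonneg (by linarith)]
            linarith
          calc |f x - f y| ≤ |f x - f (⟨(y:ℝ) - w3, hz0, hz1⟩ : Set.Icc (0:ℝ) 1)|
                + |f (⟨(y:ℝ) - w3, hz0, hz1⟩ : Set.Icc (0:ℝ) 1) - f y| := abs_sub_le _ _ _
            _ ≤ 36 * ε := by linarith
      intro x y hd
      rcases le_total (x:ℝ) (y:ℝ) with h | h
      · exact key x y h (by have := abs_le.1 hd; linarith [this.2])
      · rw [abs_sub_comm]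
        exact key y x h (by rw [abs_sub_comm] at hd; have := abs_le.1 hd; linarith [this.2])
    -- node points
    have hIccmem : ∀ i : ℕ, i ≤ N → (i:ℝ) * w ∈ Set.Icc (0:ℝ) 1 := by
      intro i hi
      constructor
      · positivity
      · calc (i:ℝ) * w ≤ (N:ℝ) * w :=
            mul_le_mul_of_nonneg_right (by exact_mod_cast hi) hwpos.le
          _ = 1 := hNw
    set X : ℕ → Set.Icc (0:ℝ) 1 := fun i => ⟨max 0 (min ((i:ℝ) * w) 1),
      ⟨le_max_left _ _, max_le zero_le_one (min_le_right _ _)⟩⟩ with hXdef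
    have hX : ∀ i, i ≤ N → ((X i : ℝ)) = (i:ℝ) * w := by
      intro i hi
      have h := hIccmem i hi
      show max 0 (min ((i:ℝ) * w) 1) = (i:ℝ) * w
      rw [min_eq_left h.2, max_eq_right h.1]
    -- lattice choice per coarse interval
    have hex : ∀ i : ℕ, ∃ (c : ℝ) (k : ℤ), i < N →
        ((∀ y : Set.Icc (0:ℝ) 1, (i:ℝ) * w - ρ ≤ (y:ℝ) → (y:ℝ) ≤ ((i:ℝ) + 1) * w + ρ →
            |f y - c| < 32 * ε) ∧
          |c - f (X i)| ≤ 29 * ε ∧ |c - f (X (i+1))| ≤ 29 * ε ∧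
          c = 24 * ε * k + (if Even i then 0 else 12 * ε)) := by
      intro i
      by_cases hi : i < N
      swap
      · exact ⟨0, 0, fun h => absurd h hi⟩
      have hXi : ((X i : ℝ)) = (i:ℝ) * w := hX i hi.le
      have hXi1 : ((X (i+1) : ℝ)) = ((i:ℝ) + 1) * w := by
        have h := hX (i+1) hi
        rw [h]; push_cast; ring
      set T : Set ℝ := f '' {y : Set.Icc (0:ℝ) 1 |
        (i:ℝ) * w - ρ ≤ (y:ℝ) ∧ (y:ℝ) ≤ ((i:ℝ) + 1) * w + ρ} with hT
      have hmemXi : X i ∈ {y : Set.Icc (0:ℝ) 1 |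
          (i:ℝ) * w - ρ ≤ (y:ℝ) ∧ (y:ℝ) ≤ ((i:ℝ) + 1) * w + ρ} := by
        constructor <;> rw [hXi] <;> linarith [hρpos.le, hwpos.le]
      have hTne : T.Nonempty := ⟨f (X i), X i, hmemXi, rfl⟩
      have hTbddA : BddAbove T := by
        refine ⟨2 ^ C, ?_⟩
        rintro z ⟨y, hy, rfl⟩
        exact (abs_le.1 (hfb y)).2
      have hTbddB : BddBelow T := by
        refine ⟨-(2 ^ C), ?_⟩
        rintro z ⟨y, hy, rfl⟩
        exact (abs_le.1 (hfb y)).1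
      have hdist : ∀ y : Set.Icc (0:ℝ) 1, (i:ℝ) * w - ρ ≤ (y:ℝ) →
          (y:ℝ) ≤ ((i:ℝ) + 1) * w + ρ →
          |(y:ℝ) - ((X i : ℝ))| ≤ w + 2 * ρ ∧ |(y:ℝ) - ((X (i+1) : ℝ))| ≤ w + 2 * ρ := by
        intro y h1 h2
        rw [hXi, hXi1]
        constructor <;> rw [abs_le] <;> constructor <;> linarith [hρpos.le, hwpos.le]
      set SA : ℝ := sSup T with hSAdef
      set IA : ℝ := sInf T with hIAdef
      have hSA1 : SA ≤ f (X i) + 36 * ε := by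
        apply csSup_le hTne
        rintro z ⟨y, hy, rfl⟩
        have := Hch y (X i) (hdist y hy.1 hy.2).1
        linarith [(abs_le.1 this).1, (abs_le.1 this).2]
      have hSA2 : SA ≤ f (X (i+1)) + 36 * ε := by
        apply csSup_le hTne
        rintro z ⟨y, hy, rfl⟩
        have := Hch y (X (i+1)) (hdist y hy.1 hy.2).2
        linarith [(abs_le.1 this).1, (abs_le.1 this).2]
      have hIA1 : f (X i) - 36 * ε ≤ IA := by
        apply le_csInf hTne
        rintro z ⟨y, hy, rfl⟩
        have := Hch y (X i) (hdist y hy.1 hy.2).1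
        linarith [(abs_le.1 this).1, (abs_le.1 this).2]
      have hIA2 : f (X (i+1)) - 36 * ε ≤ IA := by
        apply le_csInf hTne
        rintro z ⟨y, hy, rfl⟩
        have := Hch y (X (i+1)) (hdist y hy.1 hy.2).2
        linarith [(abs_le.1 this).1, (abs_le.1 this).2]
      have hSIA : SA ≤ IA + 36 * ε := by
        apply csSup_le hTne
        rintro z ⟨y, hy, rfl⟩
        have hyI : f y - 36 * ε ≤ IA := by
          apply le_csInf hTne
          rintro z' ⟨y', hy', rfl⟩
          have hd : |(y:ℝ) - (y':ℝ)| ≤ w + 2 * ρ := by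
            rw [abs_le]
            constructor <;> linarith [hy.1, hy.2, hy'.1, hy'.2, hρpos.le, hwpos.le]
          have := Hch y y' hd
          linarith [(abs_le.1 this).1, (abs_le.1 this).2]
        linarith
      have hfd := H1 (X i) (X (i+1)) (by
        rw [hXi, hXi1, abs_le]
        constructor <;> linarith [hwpos.le])
      have hfd' := abs_lt.1 hfd
      set lo : ℝ := max (SA - 32 * ε) (max (f (X i) - 29 * ε) (f (X (i+1)) - 29 * ε)) with hlo
      set hi2 : ℝ := min (IA + 32 * ε) (min (f (X i) + 29 * ε) (f (X (i+1)) + 29 * ε)) with hhi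
      have hstep9 : ∀ A : ℝ, SA - 32 * ε < A - 24 * ε → f (X i) - 29 * ε < A - 24 * ε →
          f (X (i+1)) - 29 * ε < A - 24 * ε → lo + 24 * ε < A := by
        intro A h1 h2 h3
        rw [← lt_sub_iff_add_lt, hlo]
        exact max_lt h1 (max_lt h2 h3)
      have h9 : lo + 24 * ε < hi2 := by
        rw [hhi]
        apply lt_min
        · exact hstep9 _ (by linarith) (by linarith) (by linarith)
        apply lt_min
        · exact hstep9 _ (by linarith) (by linarith) (by linarith)
        · exact hstep9 _ (by linarith) (by linarith) (by linarith)
      obtain ⟨k, hk1, hk2⟩ := AA15.latt (24 * ε) lo hi2 (if Even i then 0 else 12 * ε)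
        (by positivity) h9
      refine ⟨24 * ε * k + (if Even i then 0 else 12 * ε), k, fun _ => ⟨?_, ?_, ?_, rfl⟩⟩
      · intro y hy1 hy2
        have hyT : f y ∈ T := ⟨y, ⟨hy1, hy2⟩, rfl⟩
        have hyS : f y ≤ SA := le_csSup hTbddA hyT
        have hyI : IA ≤ f y := csInf_le hTbddB hyT
        have hl1 : SA - 32 * ε ≤ lo := by rw [hlo]; exact le_max_left _ _
        have hl2 : hi2 ≤ IA + 32 * ε := by rw [hhi]; exact min_le_left _ _
        rw [abs_lt]
        constructor <;> linarith
      · have hl1 : f (X i) - 29 * ε ≤ lo := by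
          rw [hlo]; exact le_max_of_le_right (le_max_left _ _)
        have hl2 : hi2 ≤ f (X i) + 29 * ε := by
          rw [hhi]; exact min_le_of_right_le (min_le_left _ _)
        rw [abs_le]
        constructor <;> linarith
      · have hl1 : f (X (i+1)) - 29 * ε ≤ lo := by
          rw [hlo]; exact le_max_of_le_right (le_max_right _ _)
        have hl2 : hi2 ≤ f (X (i+1)) + 29 * ε := by
          rw [hhi]; exact min_le_of_right_le (min_le_right _ _)
        rw [abs_le]
        constructor <;> linarith
    choose cF kF hcF using hex
    -- step codes
    have hstepex : ∀ j : ℕ, ∃ e : ℕ, j < N - 1 →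
        e < 4 ∧ (2 * (e:ℝ) - 3) * (24 * ε / 2) = cF (j+1) - cF j := by
      intro j
      by_cases hj : j < N - 1
      swap
      · exact ⟨0, fun h => absurd h hj⟩
      have hj1 : j < N := by omega
      have hj2 : j + 1 < N := by omega
      obtain ⟨_, _, hc3j, hc4j⟩ := hcF j hj1
      obtain ⟨_, hc2j1, _, hc4j1⟩ := hcF (j+1) hj2
      have hΔ : |cF (j+1) - cF j| ≤ 58 * ε := by
        have a1 := abs_le.1 hc3j
        have a2 := abs_le.1 hc2j1
        rw [abs_le]
        constructor <;> linarith
      obtain ⟨o, ho⟩ : ∃ o : ℤ, o = 2 * (kF (j+1) - kF j) + (if Even j then 1 else -1) :=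
        ⟨_, rfl⟩
      have hco : cF (j+1) - cF j = 12 * ε * o := by
        rcases Nat.even_or_odd j with he | hodd
        · have he1 : ¬ Even (j+1) := by simp [Nat.even_add_one, he]
          rw [hc4j, hc4j1, if_pos he, if_neg he1, ho, if_pos he]
          push_cast
          ring
        · have he0 : ¬ Even j := Nat.not_even_iff_odd.2 hodd
          have he1 : Even (j+1) := Nat.even_add_one.2 he0
          rw [hc4j, hc4j1, if_neg he0, if_pos he1, ho, if_neg he0]
          push_cast
          ring
      have hob : -4 ≤ o ∧ o ≤ 4 := by
        have h12 : |(12:ℝ) * ε * (o:ℝ)| ≤ 58 * ε := by rw [← hco]; exact hΔ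
        rw [abs_mul, abs_of_nonneg (by positivity : (0:ℝ) ≤ 12 * ε)] at h12
        have h5 : |(o:ℝ)| < 5 := by nlinarith
        have h5' : |o| < 5 := by exact_mod_cast h5
        have := abs_lt.1 h5'
        omega
      have hoodd : o % 2 ≠ 0 := by
        rcases Nat.even_or_odd j with he | hodd
        · rw [ho, if_pos he]; omega
        · rw [ho, if_neg (Nat.not_even_iff_odd.2 hodd)]; omega
      have hoval : o = -3 ∨ o = -1 ∨ o = 1 ∨ o = 3 := by omega
      rcases hoval with h | h | h | h
      · exact ⟨0, fun _ => ⟨by norm_num, by rw [hco, h]; push_cast; ring⟩⟩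
      · exact ⟨1, fun _ => ⟨by norm_num, by rw [hco, h]; push_cast; ring⟩⟩
      · exact ⟨2, fun _ => ⟨by norm_num, by rw [hco, h]; push_cast; ring⟩⟩
      · exact ⟨3, fun _ => ⟨by norm_num, by rw [hco, h]; push_cast; ring⟩⟩
    choose eF heF using hstepex
    set dext : ℕ → ℕ := fun j => if j < N - 1 then eF j else 0 with hdext
    have hrecon : ∀ i : ℕ, AA15.cseq (24 * ε) (N - 1) (kF 0) dext i = cF (min i (N - 1)) := by
      intro i
      induction i with
      | zero =>
        rw [AA15.cseq_zero, Nat.zero_min, (hcF 0 (by omega)).2.2.2, if_pos Even.zero]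
        ring
      | succ i ih =>
        rcases lt_or_ge i (N - 1) with h | h
        · rw [AA15.cseq_succ _ _ _ _ _ h, ih, min_eq_left (by omega : i ≤ N - 1),
            min_eq_left (by omega : i + 1 ≤ N - 1)]
          have hd : dext i = eF i := by rw [hdext]; simp [h]
          have he := (heF i h).2
          rw [hd, he]
          ring
        · rw [AA15.cseq_stable _ _ _ _ _ (by omega : N - 1 ≤ i + 1),
            ← AA15.cseq_stable _ _ _ _ _ h, ih, min_eq_right h,
            min_eq_right (by omega : N - 1 ≤ i + 1)]
    have hcmin : ∀ i : ℕ, i < N → AA15.cseq (24 * ε) (N - 1) (kF 0) dext i = cF i := by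
      intro i hi
      rw [hrecon i, min_eq_left (by omega)]
    set Vf : ℕ → ℝ := AA15.vseq (24 * ε) (N - 1) R (kF 0) dext with hVfdef
    have hVbound : ∀ j, j ≤ M → ∀ x : Set.Icc (0:ℝ) 1,
        |(x:ℝ) - (j:ℝ) * ρ| ≤ ρ → |f x - Vf j| < 32 * ε := by
      intro j hjM x hx
      by_cases hcase : R ∣ j ∧ j ≠ 0
      · obtain ⟨hdvd, hj0⟩ := hcase
        obtain ⟨i, rfl⟩ := hdvd
        have hdivRi : R * i / R = i := Nat.mul_div_cancel_left i hRpos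
        have hi1 : 1 ≤ i := by
          rcases Nat.eq_zero_or_pos i with h | h
          · subst h; simp at hj0
          · exact h
        have hiN : i ≤ N := by
          rw [hMRN, mul_comm N R] at hjM
          exact Nat.le_of_mul_le_mul_left hjM hRpos
        have hyx : ((R * i : ℕ):ℝ) * ρ = (i:ℝ) * w := by
          push_cast
          rw [← hRρ]
          ring
        have hXi : ((X i : ℝ)) = (i:ℝ) * w := hX i hiN
        have hfx : |f x - f (X i)| < 2 * ε := by
          apply H5
          rw [hXi, ← hyx]
          exact hx
        have hVval : Vf (R * i) = (cF (i - 1) + cF (min i (N-1))) / 2 := by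
          rw [hVfdef, AA15.vseq, if_pos ⟨⟨i, rfl⟩, hj0⟩, hdivRi, hrecon, hrecon]
          congr 3
          exact min_eq_left (by omega)
        have hc1 : |cF (i-1) - f (X i)| ≤ 29 * ε := by
          have h3 := (hcF (i-1) (by omega)).2.2.1
          rwa [show i - 1 + 1 = i by omega] at h3
        have hc2 : |cF (min i (N-1)) - f (X i)| ≤ 29 * ε := by
          rcases lt_or_ge i N with h | h
          · rw [min_eq_left (by omega)]
            exact (hcF i h).2.1
          · have hiN' : i = N := le_antisymm hiN h
            rw [hiN', min_eq_right (by omega)]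
            have h3 := (hcF (N-1) (by omega)).2.2.1
            rwa [show N - 1 + 1 = N by omega] at h3
        rw [hVval]
        have a1 := abs_le.1 hc1
        have a2 := abs_le.1 hc2
        have a3 := abs_lt.1 hfx
        rw [abs_lt]
        constructor <;> linarith
      · have hjM' : j < M := by
          rcases Nat.lt_or_ge j M with h | h
          · exact h
          · exfalso
            have hjeq : j = M := le_antisymm hjM h
            apply hcase
            constructor
            · rw [hjeq, hMRN]
              exact ⟨N, mul_comm N R⟩
            · rw [hjeq]; omega
        have hiN : j / R < N := by
          rw [hMRN] at hjM'
          exact (Nat.div_lt_iff_lt_mul hRpos).2 hjM'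
        have hVval : Vf j = cF (j / R) := by
          rw [hVfdef, AA15.vseq, if_neg hcase, hcmin _ hiN]
        obtain ⟨hwin, _, _, _⟩ := hcF (j / R) hiN
        rw [hVval]
        apply hwin x
        · have h1 : ((j/R : ℕ):ℝ) * w ≤ (j:ℝ) * ρ := by
            have h2 : (j / R) * R ≤ j := Nat.div_mul_le_self j R
            calc ((j/R : ℕ):ℝ) * w = (((j/R) * R : ℕ):ℝ) * ρ := by
                  push_cast; rw [← hRρ]; ring
              _ ≤ (j:ℝ) * ρ := by
                  apply mul_le_mul_of_nonneg_right _ hρpos.le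
                  exact_mod_cast h2
          have hx' := abs_le.1 hx
          linarith [hx'.1]
        · have h1 : (j:ℝ) * ρ + ρ ≤ (((j/R : ℕ):ℝ) + 1) * w := by
            have h2 : j + 1 ≤ (j / R + 1) * R := by
              have h3 := Nat.lt_mul_div_succ j hRpos
              calc j + 1 ≤ R * (j / R + 1) := h3
                _ = (j / R + 1) * R := mul_comm _ _
            calc (j:ℝ) * ρ + ρ = ((j + 1 : ℕ):ℝ) * ρ := by push_cast; ring
              _ ≤ (((j/R + 1) * R : ℕ):ℝ) * ρ := by
                  apply mul_le_mul_of_nonneg_right _ hρpos.le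
                  exact_mod_cast h2
              _ = (((j/R : ℕ):ℝ) + 1) * w := by push_cast; rw [← hRρ]; ring
          have hx' := abs_le.1 hx
          linarith [hx'.2]
    -- membership of the initial index
    have hk0mem : kF 0 ∈ Finset.Icc (-K0) K0 := by
      obtain ⟨_, hc20, _, hc40⟩ := hcF 0 (by omega)
      rw [if_pos Even.zero, add_zero] at hc40
      have hb0 : |cF 0| ≤ 2 ^ C + 29 * ε := by
        have a1 := abs_le.1 hc20
        have a2 := abs_le.1 (hfb (X 0))
        rw [abs_le]
        constructor <;> linarith
      have hb1 : 24 * ε * |((kF 0 : ℤ):ℝ)| ≤ 2 ^ C + 29 * ε := by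
        rw [← abs_of_nonneg (by positivity : (0:ℝ) ≤ 24 * ε), ← abs_mul, ← hc40]
        exact hb0
      have hpow : ε * (2:ℝ) ^ (n + C + 1) = (2:ℝ) ^ C / 16 := by
        rw [hεdef, ← zpow_natCast (2:ℝ) (n + C + 1), ← zpow_add₀ (two_ne_zero)]
        rw [show (-(n:ℤ) - 5) + ((n + C + 1 : ℕ):ℤ) = (C:ℤ) - 4 by push_cast; ring]
        rw [zpow_sub₀ (two_ne_zero), zpow_natCast]
        norm_num
      have hKb : 24 * ε * |((kF 0 : ℤ):ℝ)| ≤ 24 * ε * ((K0:ℤ):ℝ) := by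
        have h2C : (0:ℝ) < 2 ^ C := by positivity
        rw [hK0def]
        push_cast
        nlinarith [hb1, hpow]
      have habs : |((kF 0 : ℤ):ℝ)| ≤ ((K0:ℤ):ℝ) :=
        le_of_mul_le_mul_left hKb (by positivity)
      have habs' : |kF 0| ≤ K0 := by exact_mod_cast habs
      rw [Finset.mem_Icc]
      constructor <;> [linarith [(abs_le.1 habs').1]; exact (abs_le.1 habs').2]
    refine Set.mem_iUnion₂.2
      ⟨AA15.pl (AA15.vseq (24 * ε) (N - 1) R (kF 0) dext) M, ?_, ?_⟩
    · apply Finset.mem_image.2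
      refine ⟨(kF 0, fun j : Fin (N-1) => (⟨eF j.1, (heF j.1 j.2).1⟩ : Fin 4)), ?_, ?_⟩
      · rw [Finset.mem_product]
        exact ⟨hk0mem, Finset.mem_univ _⟩
      · have harg : (fun j => if h : j < N - 1 then
            (((⟨eF j, (heF j h).1⟩ : Fin 4)) : ℕ) else 0) = dext := by
          funext j
          rw [hdext]
          by_cases h : j < N - 1
          · simp [h]
          · simp [h]
        show AA15.pl (AA15.vseq (24 * ε) (N - 1) R (kF 0) _) M = _
        rw [harg]
    · rw [Metric.mem_ball, hδε]
      exact AA15.pl_close _ M ρ (32 * ε) f hρpos (by positivity) hMρ hMpos hVbound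
end
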